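/- arXiv:2512.14570 — 5 statements merged into one kernel-verified Lean document; each statement's English description precedes it below -/
import Mathlib

section
/- Let T = [a, b] with a < b be a real interval and let p, n be integers with −1 ≤ n ≤ p. Then for every polynomial ξ ∈ ℙ_p(T), the function θ := ξ − Π_T^n ξ satisfies |θ(a)|² ≤ ((p−n)(p+n+2)/(b−a)) · ‖θ‖²_{L²(T)}. -/
open MeasureTheory Polynomial intervalIntegral

namespace ITI

/-- integration by parts for polynomials -/
lemma byparts (a b : ℝ) (P Q : ℝ[X]) :
    ∫ x in a..b, (derivative P).eval x * Q.eval x =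
      P.eval b * Q.eval b - P.eval a * Q.eval a - ∫ x in a..b, P.eval x * (derivative Q).eval x := by
  have h : ∀ x ∈ Set.uIcc a b, HasDerivAt (fun x => P.eval x * Q.eval x)
      ((derivative P).eval x * Q.eval x + P.eval x * (derivative Q).eval x) x := fun x _ =>
    (P.hasDerivAt x).mul (Q.hasDerivAt x)
  have c1 : Continuous fun x => (derivative P).eval x * Q.eval x :=
    ((derivative P).continuous).mul Q.continuous
  have c2 : Continuous fun x => P.eval x * (derivative Q).eval x :=
    P.continuous.mul (derivative Q).continuous
  have hint := (c1.add c2).intervalIntegrable (μ := volume) a b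
  have := intervalIntegral.integral_eq_sub_of_hasDerivAt h hint
  rw [intervalIntegral.integral_add (c1.intervalIntegrable (μ := volume) a b)
    (c2.intervalIntegrable (μ := volume) a b)] at this
  linarith

/-- iterated integration by parts -/
lemma byparts_iter (a b : ℝ) : ∀ (k : ℕ) (Q q : ℝ[X]),
    (∀ j < k, (derivative^[j] Q).eval a = 0 ∧ (derivative^[j] Q).eval b = 0) →
    ∫ x in a..b, (derivative^[k] Q).eval x * q.eval x =
      (-1 : ℝ)^k * ∫ x in a..b, Q.eval x * (derivative^[k] q).eval x := by
  intro k
  induction k with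
  | zero => intro Q q _; simp
  | succ k ih =>
    intro Q q hv
    rw [Function.iterate_succ_apply']
    rw [byparts a b (derivative^[k] Q) q]
    rw [(hv k (by omega)).1, (hv k (by omega)).2]
    rw [ih Q (derivative q) (fun j hj => hv j (by omega))]
    rw [Function.iterate_succ_apply]
    ring

/-- key evaluation: the k-th derivative of (X-c)^k * f at c is k! * f(c) -/
lemma iter_deriv_eval (c : ℝ) : ∀ (k : ℕ) (f : ℝ[X]),
    (derivative^[k] ((X - C c)^k * f)).eval c = k.factorial * f.eval c := by
  intro k
  induction k with
  | zero => intro f; simp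
  | succ k ih =>
    intro f
    rw [Function.iterate_succ_apply]
    have hd : derivative ((X - C c)^(k+1) * f) =
        (X - C c)^k * (C ((k:ℝ)+1) * f + (X - C c) * derivative f) := by
      rw [derivative_mul, derivative_pow, derivative_sub, derivative_X, derivative_C]
      push_cast
      ring
    rw [hd, ih]
    simp [Nat.factorial_succ]
    ring

/-- vanishing of lower derivatives at a root of multiplicity k -/
lemma iter_deriv_root (c : ℝ) (k j : ℕ) (f : ℝ[X]) (hj : j < k) :
    (derivative^[j] ((X - C c)^k * f)).eval c = 0 := by
  have hdvd : (X - C c)^(k - j) ∣ derivative^[j] ((X - C c)^k * f) :=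
    pow_sub_dvd_iterate_derivative_of_pow_dvd j (Dvd.intro _ rfl)
  obtain ⟨g, hg⟩ := hdvd
  rw [hg]
  simp [zero_pow (by omega : k - j ≠ 0)]

end ITI

namespace ITI

noncomputable def J (a b : ℝ) (i j : ℕ) : ℝ := ∫ x in a..b, (x - a)^i * (b - x)^j

lemma J_base (a b : ℝ) (i : ℕ) : J a b i 0 = (b - a)^(i+1) / (i+1) := by
  unfold J
  simp only [pow_zero, mul_one]
  have := intervalIntegral.integral_comp_sub_right (a := a) (b := b) (fun x => x^i) a
  rw [this, integral_pow]
  simp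

lemma J_step (a b : ℝ) (i j : ℕ) : ((i:ℝ)+1) * J a b i (j+1) = ((j:ℝ)+1) * J a b (i+1) j := by
  have h := byparts a b ((X - C a)^(i+1)) ((C b - X)^(j+1))
  have e1 : ∀ x : ℝ, (derivative ((X - C a)^(i+1) : ℝ[X])).eval x * ((C b - X : ℝ[X])^(j+1)).eval x
      = ((i:ℝ)+1) * ((x-a)^i * (b-x)^(j+1)) := by
    intro x
    rw [derivative_pow]
    simp
    ring
  have e2 : ∀ x : ℝ, (((X - C a)^(i+1) : ℝ[X])).eval x * (derivative ((C b - X : ℝ[X])^(j+1))).eval x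
      = -(((j:ℝ)+1) * ((x-a)^(i+1) * (b-x)^j)) := by
    intro x
    rw [derivative_pow]
    simp
    ring
  simp only [e1, e2] at h
  rw [intervalIntegral.integral_const_mul] at h
  rw [intervalIntegral.integral_neg, intervalIntegral.integral_const_mul] at h
  simp at h
  unfold J
  linarith [h]

lemma J_val (a b : ℝ) : ∀ (j i : ℕ),
    J a b i j = (i.factorial * j.factorial / (i+j+1).factorial) * (b - a)^(i+j+1) := by
  intro j
  induction j with
  | zero =>
    intro i
    rw [J_base]
    have : (i+0+1).factorial = (i+1) * i.factorial := by
      rw [show i+0+1 = i+1 from rfl, Nat.factorial_succ]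
    rw [this]
    have h1 : (i.factorial : ℝ) ≠ 0 := Nat.cast_ne_zero.mpr i.factorial_ne_zero
    push_cast
    rw [Nat.add_zero]
    field_simp
    ring
  | succ j ih =>
    intro i
    have hs := J_step a b i j
    have hi := ih (i+1)
    have hip : ((i:ℝ)+1) ≠ 0 := by positivity
    have : J a b i (j+1) = ((j:ℝ)+1) / ((i:ℝ)+1) * J a b (i+1) j := by
      field_simp at hs ⊢; linarith
    rw [this, hi]
    have harr : i + 1 + j + 1 = i + (j+1) + 1 := by omega
    rw [harr]
    rw [Nat.factorial_succ (i), Nat.factorial_succ j]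
    push_cast
    field_simp

end ITI

namespace ITI

noncomputable def L (a b : ℝ) (k : ℕ) : ℝ[X] := derivative^[k] (((X - C a) * (X - C b))^k)

lemma Q_monic (a b : ℝ) (k : ℕ) : (((X - C a) * (X - C b))^k : ℝ[X]).Monic :=
  ((monic_X_sub_C a).mul (monic_X_sub_C b)).pow k

lemma Q_natDegree (a b : ℝ) (k : ℕ) : (((X - C a) * (X - C b))^k : ℝ[X]).natDegree = 2*k := by
  rw [natDegree_pow, natDegree_mul (X_sub_C_ne_zero a) (X_sub_C_ne_zero b),
    natDegree_X_sub_C, natDegree_X_sub_C]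
  omega

lemma L_natDegree (a b : ℝ) (k : ℕ) : (L a b k).natDegree ≤ k := by
  have := natDegree_iterate_derivative (((X - C a) * (X - C b))^k : ℝ[X]) k
  rw [Q_natDegree] at this
  unfold L
  omega

lemma L_coeff (a b : ℝ) (k : ℕ) : (L a b k).coeff k = (2*k).descFactorial k := by
  unfold L
  rw [coeff_iterate_derivative]
  have h1 : k + k = 2*k := by omega
  rw [h1, show (((X - C a) * (X - C b))^k : ℝ[X]).coeff (2*k) = 1 from by
    rw [← Q_natDegree a b k]; exact (Q_monic a b k).coeff_natDegree]
  simp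

lemma L_coeff_ne (a b : ℝ) (k : ℕ) : (L a b k).coeff k ≠ 0 := by
  rw [L_coeff]
  have : (2*k).descFactorial k ≠ 0 := by
    rw [Ne, Nat.descFactorial_eq_zero_iff_lt]
    omega
  exact_mod_cast this

lemma L_eval_a (a b : ℝ) (k : ℕ) : (L a b k).eval a = k.factorial * (a - b)^k := by
  unfold L
  rw [show ((X - C a) * (X - C b))^k = (X - C a)^k * ((X - C b)^k) from by rw [mul_pow]]
  rw [iter_deriv_eval]
  simp

lemma L_vanish (a b : ℝ) (k : ℕ) : ∀ j < k,
    (derivative^[j] (((X - C a) * (X - C b))^k : ℝ[X])).eval a = 0 ∧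
    (derivative^[j] (((X - C a) * (X - C b))^k : ℝ[X])).eval b = 0 := by
  intro j hj
  constructor
  · rw [show ((X - C a) * (X - C b))^k = (X - C a)^k * ((X - C b)^k) from by rw [mul_pow]]
    exact iter_deriv_root a k j _ hj
  · rw [show ((X - C a) * (X - C b))^k = (X - C b)^k * ((X - C a)^k) from by rw [← mul_pow]; ring_nf]
    exact iter_deriv_root b k j _ hj

lemma L_orth (a b : ℝ) (k : ℕ) (q : ℝ[X]) (hq : derivative^[k] q = 0) :
    ∫ x in a..b, (L a b k).eval x * q.eval x = 0 := by
  unfold L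
  rw [byparts_iter a b k _ q (L_vanish a b k), hq]
  simp

lemma iter_2k (a b : ℝ) (k : ℕ) :
    derivative^[2*k] (((X - C a) * (X - C b))^k : ℝ[X]) = C ((2*k).factorial : ℝ) := by
  set Q : ℝ[X] := ((X - C a) * (X - C b))^k with hQ
  have hdeg : (derivative^[2*k] Q).natDegree ≤ 0 := by
    have := natDegree_iterate_derivative Q (2*k)
    rw [Q_natDegree] at this
    omega
  rw [Polynomial.eq_C_of_natDegree_le_zero hdeg]
  congr 1
  rw [coeff_iterate_derivative]
  simp only [zero_add]
  rw [show Q.coeff (2*k) = 1 from by rw [← Q_natDegree a b k]; exact (Q_monic a b k).coeff_natDegree]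
  simp [Nat.descFactorial_self]

lemma L_norm (a b : ℝ) (k : ℕ) :
    ∫ x in a..b, (L a b k).eval x * (L a b k).eval x =
      (k.factorial : ℝ)^2 * (b - a)^(2*k+1) / (2*k+1) := by
  have h := byparts_iter a b k (((X - C a) * (X - C b))^k) (L a b k) (L_vanish a b k)
  unfold L at h ⊢
  rw [show derivative^[k] (derivative^[k] (((X - C a) * (X - C b))^k : ℝ[X])) =
        derivative^[2*k] (((X - C a) * (X - C b))^k : ℝ[X]) from by
      rw [← Function.iterate_add_apply]; congr 1; omega] at h
  rw [iter_2k] at h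
  rw [h]
  have he : ∀ x : ℝ, (((X - C a) * (X - C b))^k : ℝ[X]).eval x * ((2*k).factorial : ℝ)
      = ((2*k).factorial : ℝ) * (-1:ℝ)^k * ((x-a)^k * (b-x)^k) := by
    intro x
    simp only [eval_pow, eval_mul, eval_sub, eval_X, eval_C]
    rw [show (x - a) * (x - b) = (-1) * ((x-a)*(b-x)) from by ring, mul_pow, mul_pow]
    ring
  simp only [eval_C, he]
  rw [intervalIntegral.integral_const_mul]
  rw [show (∫ x in a..b, (x-a)^k * (b-x)^k) = J a b k k from rfl, J_val]
  have h2 : (k + k + 1).factorial = (2*k+1) * (2*k).factorial := by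
    rw [show k + k + 1 = (2*k) + 1 from by omega, Nat.factorial_succ]
  rw [h2]
  have hf : ((2*k).factorial : ℝ) ≠ 0 := Nat.cast_ne_zero.mpr (Nat.factorial_ne_zero _)
  have hf1 : ((2*k:ℕ):ℝ)+1 ≠ 0 := by positivity
  rw [show k + k + 1 = 2*k+1 from by omega]
  have ht : (-1:ℝ)^k * (-1:ℝ)^k = 1 := by rw [← mul_pow]; norm_num
  push_cast
  field_simp
  linear_combination ((b-a)^(2*k+1)) * ht

end ITI

namespace ITI

lemma poly_intble (a b : ℝ) (f g : ℝ[X]) :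
    IntervalIntegrable (fun x => f.eval x * g.eval x) volume a b :=
  (f.continuous.mul g.continuous).intervalIntegrable (μ := volume) a b

/-- a polynomial orthogonal to itself on [a,b] vanishes -/
lemma eq_zero_of_self_orth (a b : ℝ) (hab : a < b) (r : ℝ[X])
    (h : ∫ x in a..b, r.eval x * r.eval x = 0) : r = 0 := by
  by_contra hr
  rw [intervalIntegral.integral_of_le hab.le] at h
  have hnn : 0 ≤ᵐ[volume.restrict (Set.Ioc a b)] fun x => r.eval x * r.eval x :=
    Filter.Eventually.of_forall fun x => mul_self_nonneg _
  have hint : IntegrableOn (fun x => r.eval x * r.eval x) (Set.Ioc a b) volume :=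
    (r.continuous.mul r.continuous).integrableOn_Ioc
  have hae := (setIntegral_eq_zero_iff_of_nonneg_ae hnn hint).mp h
  have hmeas : MeasurableSet {x : ℝ | r.eval x * r.eval x ≠ 0} :=
    (isOpen_ne.preimage (r.continuous.mul r.continuous)).measurableSet
  have h0 : volume ({x : ℝ | r.eval x * r.eval x ≠ 0} ∩ Set.Ioc a b) = 0 := by
    have := Filter.eventuallyEq_iff_exists_mem.mp hae
    have h2 : volume.restrict (Set.Ioc a b) {x : ℝ | r.eval x * r.eval x ≠ 0} = 0 := by
      rw [← Filter.eventuallyEq_iff_exists_mem] at this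
      have := hae
      rw [Filter.EventuallyEq, ae_iff] at this
      simpa using this
    rwa [Measure.restrict_apply hmeas] at h2
  have hroots : volume {x : ℝ | r.IsRoot x} = 0 :=
    (Polynomial.finite_setOf_isRoot hr).measure_zero volume
  have hsub : Set.Ioc a b ⊆ ({x : ℝ | r.eval x * r.eval x ≠ 0} ∩ Set.Ioc a b) ∪ {x : ℝ | r.IsRoot x} := by
    intro x hx
    by_cases hc : r.eval x = 0
    · exact Or.inr hc
    · exact Or.inl ⟨mul_ne_zero hc hc, hx⟩
  have := measure_mono (μ := volume) hsub
  have hle := le_trans this (measure_union_le _ _)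
  rw [h0, hroots] at hle
  simp only [add_zero, nonpos_iff_eq_zero] at hle
  rw [Real.volume_Ioc] at hle
  have hba : (0:ℝ) < b - a := by linarith
  rw [ENNReal.ofReal_eq_zero] at hle
  linarith

/-- linearity helpers -/
lemma int_mul_add (a b : ℝ) (r q1 q2 : ℝ[X]) :
    ∫ x in a..b, r.eval x * (q1 + q2).eval x =
      (∫ x in a..b, r.eval x * q1.eval x) + ∫ x in a..b, r.eval x * q2.eval x := by
  simp only [eval_add, mul_add]
  exact intervalIntegral.integral_add (poly_intble a b r q1) (poly_intble a b r q2)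

lemma int_mul_Cmul (a b : ℝ) (r q : ℝ[X]) (c : ℝ) :
    ∫ x in a..b, r.eval x * (C c * q).eval x = c * ∫ x in a..b, r.eval x * q.eval x := by
  simp only [eval_mul, eval_C]
  rw [← intervalIntegral.integral_const_mul]
  congr 1; funext x; ring

lemma int_sum_mul {ι : Type*} (a b : ℝ) (s : Finset ι) (F : ι → ℝ[X]) (g : ℝ[X]) :
    ∫ x in a..b, (∑ i ∈ s, F i).eval x * g.eval x =
      ∑ i ∈ s, ∫ x in a..b, (F i).eval x * g.eval x := by
  simp only [eval_finset_sum, Finset.sum_mul]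
  exact intervalIntegral.integral_finset_sum fun i _ => poly_intble a b (F i) g

/-- spanning: orthogonal to L 0, ..., L P implies orthogonal to all of ℙ_P -/
lemma orth_all (a b : ℝ) (P : ℕ) (r : ℝ[X])
    (h : ∀ j ≤ P, ∫ x in a..b, r.eval x * (L a b j).eval x = 0) :
    ∀ d, d ≤ P → ∀ q : ℝ[X], q.natDegree ≤ d → ∫ x in a..b, r.eval x * q.eval x = 0 := by
  intro d
  induction d using Nat.strong_induction_on with
  | _ d ih =>
    intro hdP q hq
    set c : ℝ := q.coeff d / (L a b d).coeff d with hc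
    set q' : ℝ[X] := q - C c * L a b d with hq'
    have hsplit : q = q' + C c * L a b d := by rw [hq']; ring
    have hint : ∫ x in a..b, r.eval x * q.eval x = ∫ x in a..b, r.eval x * q'.eval x := by
      rw [hsplit, int_mul_add, int_mul_Cmul, h d hdP]
      ring
    rw [hint]
    have hq'deg : q'.natDegree ≤ d := by
      rw [hq']
      apply le_trans (natDegree_sub_le _ _)
      apply max_le hq
      apply le_trans (natDegree_mul_le)
      simp [L_natDegree a b d]
    have hq'c : q'.coeff d = 0 := by
      rw [hq']
      simp only [coeff_sub, coeff_C_mul]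
      rw [hc]
      field_simp [L_coeff_ne a b d]
      simp
    by_cases h0 : q' = 0
    · rw [h0]; simp
    · have hlt : q'.natDegree < d := by
        rcases lt_or_eq_of_le hq'deg with h1 | h1
        · exact h1
        · exfalso
          apply h0
          have hlc : q'.leadingCoeff = 0 := by
            unfold Polynomial.leadingCoeff
            rw [h1]; exact hq'c
          exact leadingCoeff_eq_zero.mp hlc
      exact ih q'.natDegree hlt (by omega) q' le_rfl

/-- sum of odd numbers -/
lemma sum_odd (N : ℕ) : ∑ k ∈ Finset.range N, (2*(k:ℝ)+1) = (N:ℝ)^2 := by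
  induction N with
  | zero => simp
  | succ N ih => rw [Finset.sum_range_succ, ih]; push_cast; ring

end ITI

namespace ITI

lemma int_sub_mul (a b : ℝ) (f g h : ℝ[X]) :
    ∫ x in a..b, (f - g).eval x * h.eval x =
      (∫ x in a..b, f.eval x * h.eval x) - ∫ x in a..b, g.eval x * h.eval x := by
  simp only [eval_sub, sub_mul]
  exact intervalIntegral.integral_sub (poly_intble a b f h) (poly_intble a b g h)

lemma int_Cmul_mul (a b : ℝ) (q h : ℝ[X]) (c : ℝ) :
    ∫ x in a..b, (C c * q).eval x * h.eval x = c * ∫ x in a..b, q.eval x * h.eval x := by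
  simp only [eval_mul, eval_C]
  rw [← intervalIntegral.integral_const_mul]
  congr 1; funext x; ring

lemma int_comm (a b : ℝ) (f g : ℝ[X]) :
    ∫ x in a..b, f.eval x * g.eval x = ∫ x in a..b, g.eval x * f.eval x := by
  congr 1; funext x; ring

lemma L_orth' (a b : ℝ) {j k : ℕ} (hjk : j ≠ k) :
    ∫ x in a..b, (L a b j).eval x * (L a b k).eval x = 0 := by
  rcases lt_or_gt_of_ne hjk with h | h
  · rw [int_comm]
    exact L_orth a b k _ (iterate_derivative_eq_zero (lt_of_le_of_lt (L_natDegree a b j) h))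
  · exact L_orth a b j _ (iterate_derivative_eq_zero (lt_of_le_of_lt (L_natDegree a b k) h))

end ITI

open ITI

/-- **Inverse trace inequality on a finite interval.**  Let `T = [a, b]` with `a < b`,
let `-1 ≤ n ≤ p` be integers, let `ξ ∈ ℙ_p(T)`, and let `π = Π_T^n ξ` be the
`L²(T)`-orthogonal projection of `ξ` onto `ℙ_n(T)` (characterized by `π ∈ ℙ_n(T)`,
with `π = 0` when `n = -1`, and `ξ - π ⟂ ℙ_n(T)`).  Then with `θ := ξ - π`,
`|θ(a)|² ≤ ((p-n)(p+n+2)/(b-a)) ⬝ ‖θ‖²_{L²(T)}`. -/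
theorem inverse_trace_inequality_interval
    (a b : ℝ) (hab : a < b)
    (p n : ℤ) (hn : -1 ≤ n) (hnp : n ≤ p)
    (ξ π : Polynomial ℝ)
    (hξ : ξ = 0 ∨ (ξ.natDegree : ℤ) ≤ p)
    (hπ : π = 0 ∨ (π.natDegree : ℤ) ≤ n)
    (horth : ∀ q : Polynomial ℝ, (q.natDegree : ℤ) ≤ n →
      ∫ x in Set.Icc a b, (ξ - π).eval x * q.eval x = 0) :
    ((ξ - π).eval a) ^ 2 ≤
      (((p - n) * (p + n + 2) : ℤ) : ℝ) / (b - a) *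
        ∫ x in Set.Icc a b, ((ξ - π).eval x) ^ 2 := by
  set θ : ℝ[X] := ξ - π with hθ
  have hIcc : ∀ f : ℝ → ℝ, (∫ x in Set.Icc a b, f x) = ∫ x in a..b, f x := by
    intro f
    rw [MeasureTheory.integral_Icc_eq_integral_Ioc, ← intervalIntegral.integral_of_le hab.le]
  -- degenerate case p = -1
  by_cases hp0 : p < 0
  · have hpm : p = -1 := by omega
    have hξ0 : ξ = 0 := by
      rcases hξ with h | h
      · exact h
      · exfalso; have := Int.natCast_nonneg ξ.natDegree; omega
    have hπ0 : π = 0 := by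
      rcases hπ with h | h
      · exact h
      · exfalso; have := Int.natCast_nonneg π.natDegree; omega
    rw [hθ, hξ0, hπ0]
    simp
  push_neg at hp0
  -- main case
  set P : ℕ := p.toNat with hPdef
  have hP : (P : ℤ) = p := Int.toNat_of_nonneg hp0
  set m : ℕ := (n+1).toNat with hmdef
  have hm : (m : ℤ) = n + 1 := Int.toNat_of_nonneg (by omega)
  have hmP : m ≤ P + 1 := by omega
  have hθdeg : θ.natDegree ≤ P := by
    have h1 : ξ.natDegree ≤ P := by
      rcases hξ with h | h
      · simp [h]
      · omega
    have h2 : π.natDegree ≤ P := by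
      rcases hπ with h | h
      · simp [h]
      · omega
    exact le_trans (natDegree_sub_le _ _) (max_le h1 h2)
  set w : ℕ → ℝ := fun k => (k.factorial : ℝ)^2 * (b - a)^(2*k+1) / (2*k+1) with hwdef
  have hba : (0:ℝ) < b - a := by linarith
  have hwpos : ∀ k, 0 < w k := by
    intro k
    have h1 : (0:ℝ) < (k.factorial : ℝ) := by exact_mod_cast k.factorial_pos
    have h2 : (0:ℝ) < (b - a)^(2*k+1) := by positivity
    have h3 : (0:ℝ) < 2*(k:ℝ)+1 := by positivity
    rw [hwdef]
    push_cast
    positivity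
  have hor' : ∀ q : ℝ[X], (q.natDegree : ℤ) ≤ n → ∫ x in a..b, θ.eval x * q.eval x = 0 := by
    intro q hq
    rw [← hIcc]
    exact horth q hq
  set c : ℕ → ℝ := fun k => (∫ x in a..b, θ.eval x * (L a b k).eval x) / w k with hcdef
  have hθL : ∀ k, ∫ x in a..b, θ.eval x * (L a b k).eval x = c k * w k := by
    intro k
    rw [hcdef]
    field_simp [(hwpos k).ne']
  set S : ℝ[X] := ∑ k ∈ Finset.range (P+1), C (c k) * L a b k with hSdef
  have hLnorm : ∀ k, ∫ x in a..b, (L a b k).eval x * (L a b k).eval x = w k := fun k => L_norm a b k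
  -- the residual is orthogonal to each L j, j ≤ P
  have hLr : ∀ j ≤ P, ∫ x in a..b, (θ - S).eval x * (L a b j).eval x = 0 := by
    intro j hj
    rw [int_sub_mul, hSdef, int_sum_mul]
    have hterm : ∀ k ∈ Finset.range (P+1),
        (∫ x in a..b, (C (c k) * L a b k).eval x * (L a b j).eval x) =
          if k = j then c j * w j else 0 := by
      intro k _
      rw [int_Cmul_mul]
      by_cases hkj : k = j
      · subst hkj; rw [if_pos rfl, hLnorm]
      · rw [if_neg hkj, L_orth' a b hkj, mul_zero]
    rw [Finset.sum_congr rfl hterm, Finset.sum_ite_eq' (Finset.range (P+1)) j fun _ => c j * w j]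
    rw [if_pos (Finset.mem_range.mpr (by omega)), hθL]
    ring
  -- residual vanishes
  have hSdeg : S.natDegree ≤ P := by
    rw [hSdef]
    apply natDegree_sum_le_of_forall_le
    intro i hi
    apply le_trans natDegree_mul_le
    have := L_natDegree a b i
    have hi' := Finset.mem_range.mp hi
    simp only [natDegree_C, zero_add]
    omega
  have hr0 : θ - S = 0 := by
    apply eq_zero_of_self_orth a b hab
    exact orth_all a b P (θ - S) hLr P le_rfl (θ - S)
      (le_trans (natDegree_sub_le _ _) (max_le hθdeg hSdeg)) 
  have hθS : θ = S := sub_eq_zero.mp hr0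
  -- low coefficients vanish
  have hc0 : ∀ k, k < m → c k = 0 := by
    intro k hk
    have hdn : (↑(L a b k).natDegree : ℤ) ≤ n := by
      have := L_natDegree a b k
      omega
    simp only [hcdef]
    rw [hor' _ hdn, zero_div]
  -- restrict the sum
  have hθsum : θ = ∑ k ∈ Finset.Icc m P, C (c k) * L a b k := by
    rw [hθS, hSdef]
    symm
    apply Finset.sum_subset
    · intro k hk
      rw [Finset.mem_Icc] at hk
      exact Finset.mem_range.mpr (by omega)
    · intro k hk1 hk2
      rw [Finset.mem_range] at hk1
      rw [Finset.mem_Icc] at hk2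
      have : k < m := by omega
      rw [hc0 k this]
      simp
  -- evaluation at a
  set la : ℕ → ℝ := fun k => (k.factorial : ℝ) * (a - b)^k with hladef
  have heval : θ.eval a = ∑ k ∈ Finset.Icc m P, c k * la k := by
    conv_lhs => rw [hθsum]
    rw [eval_finset_sum]
    apply Finset.sum_congr rfl
    intro k _
    rw [eval_mul, eval_C, L_eval_a]
  -- L² norm of θ
  have hLsum : ∀ k0 ∈ Finset.Icc m P,
      (∫ x in a..b, (∑ j ∈ Finset.Icc m P, C (c j) * L a b j).eval x * (L a b k0).eval x)
        = c k0 * w k0 := by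
    intro k0 hk0
    rw [int_sum_mul]
    have hterm : ∀ j ∈ Finset.Icc m P,
        (∫ x in a..b, (C (c j) * L a b j).eval x * (L a b k0).eval x) =
          if j = k0 then c k0 * w k0 else 0 := by
      intro j _
      rw [int_Cmul_mul]
      by_cases hjk : j = k0
      · subst hjk; rw [if_pos rfl, hLnorm]
      · rw [if_neg hjk, L_orth' a b hjk, mul_zero]
    rw [Finset.sum_congr rfl hterm,
      Finset.sum_ite_eq' (Finset.Icc m P) k0 fun _ => c k0 * w k0, if_pos hk0]
  have hnorm : (∫ x in a..b, θ.eval x * θ.eval x) = ∑ k ∈ Finset.Icc m P, (c k)^2 * w k := by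
    conv_lhs => rw [hθsum]
    rw [int_sum_mul]
    apply Finset.sum_congr rfl
    intro k hk
    rw [int_Cmul_mul, int_comm, hLsum k hk]
    ring
  -- ratio computation
  have hkey : ∀ k : ℕ, (la k)^2 / w k = (2*(k:ℝ)+1)/(b-a) := by
    intro k
    have hfne : ((k.factorial : ℝ)) ≠ 0 := Nat.cast_ne_zero.mpr k.factorial_ne_zero
    have hbne : (b - a) ≠ 0 := hba.ne'
    have hpne : ((b-a)^k) ≠ 0 := pow_ne_zero _ hbne
    have h2k1 : (2*(k:ℝ)+1) ≠ 0 := by positivity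
    have hsq : (la k)^2 = (k.factorial : ℝ)^2 * ((b-a)^k)^2 := by
      rw [hladef]
      simp only [mul_pow]
      congr 1
      rw [← pow_mul, ← pow_mul, mul_comm k 2, pow_mul, pow_mul]
      congr 1
      ring
    have hpow : (b-a)^(2*k+1) = ((b-a)^k)^2 * (b-a) := by
      rw [show 2*k+1 = k*2+1 from by omega, pow_succ, pow_mul]
    have hwk : w k = (k.factorial : ℝ)^2 * (((b-a)^k)^2 * (b-a)) / (2*(k:ℝ)+1) := by
      rw [hwdef]
      simp only []
      rw [hpow]
    rw [hsq, hwk]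
    field_simp
  -- Cauchy-Schwarz
  set f : ℕ → ℝ := fun k => la k / Real.sqrt (w k) with hfdef
  set g : ℕ → ℝ := fun k => c k * Real.sqrt (w k) with hgdef
  have hsqrt : ∀ k, Real.sqrt (w k) ^ 2 = w k := fun k => Real.sq_sqrt (hwpos k).le
  have hsne : ∀ k, Real.sqrt (w k) ≠ 0 := fun k => (Real.sqrt_pos.mpr (hwpos k)).ne'
  have hfg : ∀ k, f k * g k = c k * la k := by
    intro k
    rw [hfdef, hgdef]
    field_simp [hsne k]
  have hCS := Finset.sum_mul_sq_le_sq_mul_sq (Finset.Icc m P) f g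
  have hf2 : ∀ k, f k ^ 2 = (2*(k:ℝ)+1)/(b-a) := by
    intro k
    rw [hfdef]
    simp only [div_pow]
    rw [hsqrt, hkey]
  have hg2 : ∀ k, g k ^ 2 = c k ^2 * w k := by
    intro k
    rw [hgdef, mul_pow, hsqrt]
  have hsumf : ∑ k ∈ Finset.Icc m P, f k ^ 2 = (((P:ℝ)+1)^2 - (m:ℝ)^2) / (b-a) := by
    simp only [hf2]
    rw [← Finset.sum_div]
    congr 1
    rw [← Finset.Ico_add_one_right_eq_Icc, Finset.sum_Ico_eq_sub _ hmP, sum_odd, sum_odd]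
    push_cast
    ring
  have hconst : (((p - n) * (p + n + 2) : ℤ) : ℝ) = ((P:ℝ)+1)^2 - (m:ℝ)^2 := by
    have h1 : ((P:ℕ):ℝ) = (p:ℝ) := by exact_mod_cast congrArg (Int.cast : ℤ → ℝ) hP
    have h2 : ((m:ℕ):ℝ) = (n:ℝ) + 1 := by exact_mod_cast congrArg (Int.cast : ℤ → ℝ) hm
    push_cast
    rw [show (p:ℝ) = (P:ℝ) from h1.symm, show (n:ℝ) = (m:ℝ) - 1 from by linarith]
    ring
  -- put everything together
  rw [hIcc]
  have hsq2 : (∫ x in a..b, (θ.eval x)^2) = ∫ x in a..b, θ.eval x * θ.eval x := by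
    congr 1; funext x; ring
  rw [hsq2, hnorm, hconst]
  calc (θ.eval a)^2 = (∑ k ∈ Finset.Icc m P, f k * g k)^2 := by
        rw [heval]
        congr 1
        exact Finset.sum_congr rfl fun k _ => (hfg k).symm
    _ ≤ (∑ k ∈ Finset.Icc m P, f k ^ 2) * ∑ k ∈ Finset.Icc m P, g k ^ 2 := hCS
    _ = (((P:ℝ)+1)^2 - (m:ℝ)^2) / (b-a) * ∑ k ∈ Finset.Icc m P, (c k)^2 * w k := by
        rw [hsumf]
        congr 1
        exact Finset.sum_congr rfl fun k _ => hg2 k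
end

section
/- Let p, n be integers with −1 ≤ n ≤ p, and let θ be a real polynomial of degree at most p on [−1, 1] which is L²(−1,1)-orthogonal to every polynomial of degree at most n (no condition when n = −1). Then for x₀ ∈ {−1, 1} one has |θ(x₀)|² ≤ ((p−n)(p+n+2)/2) · ∫_{−1}^{1} θ(x)² dx. -/
open MeasureTheory Polynomial Finset

noncomputable section LegendreAux

/-- `(X²-1)^k`. -/
def Wp (k : ℕ) : Polynomial ℝ := (X ^ 2 - 1) ^ k

/-- Unnormalized Legendre polynomial (Rodrigues formula without `1/(2^k k!)`). -/
def Rp (k : ℕ) : Polynomial ℝ := derivative^[k] (Wp k)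

lemma X_sq_sub_one : (X ^ 2 - 1 : Polynomial ℝ) = X ^ 2 - C 1 := by simp

lemma Wp_monic (k : ℕ) : (Wp k).Monic := by
  rw [Wp, X_sq_sub_one]
  exact (monic_X_pow_sub_C (1 : ℝ) two_ne_zero).pow k

lemma Wp_natDegree (k : ℕ) : (Wp k).natDegree = 2 * k := by
  rw [Wp, X_sq_sub_one, (monic_X_pow_sub_C (1 : ℝ) two_ne_zero).natDegree_pow,
    natDegree_X_pow_sub_C, mul_comm]

lemma poly_intervalIntegrable (f : Polynomial ℝ) :
    IntervalIntegrable (fun x => f.eval x) volume (-1 : ℝ) 1 :=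
  (f.continuous_aeval).intervalIntegrable _ _

lemma integral_derivative (f : Polynomial ℝ) :
    ∫ x in (-1 : ℝ)..1, (derivative f).eval x = f.eval 1 - f.eval (-1) := by
  refine intervalIntegral.integral_deriv_eq_sub' (fun x => f.eval x) (funext fun x => f.deriv)
    (fun x _ => f.differentiableAt) ((derivative f).continuous_aeval.continuousOn)

lemma integral_parts (u v : Polynomial ℝ) :
    ∫ x in (-1 : ℝ)..1, (derivative u).eval x * v.eval x =
      (u.eval 1 * v.eval 1 - u.eval (-1) * v.eval (-1))
        - ∫ x in (-1 : ℝ)..1, u.eval x * (derivative v).eval x := by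
  have h := integral_derivative (u * v)
  rw [derivative_mul] at h
  have h2 : (∫ x in (-1 : ℝ)..1, (derivative u).eval x * v.eval x)
      + ∫ x in (-1 : ℝ)..1, u.eval x * (derivative v).eval x
      = u.eval 1 * v.eval 1 - u.eval (-1) * v.eval (-1) := by
    rw [← intervalIntegral.integral_add
      (by simpa [eval_mul] using poly_intervalIntegrable (derivative u * v))
      (by simpa [eval_mul] using poly_intervalIntegrable (u * derivative v))]
    simpa [eval_mul] using h
  linarith



lemma dvd_derivative {a : ℝ} {m : ℕ} {f : Polynomial ℝ}
    (h : (X - C a) ^ m ∣ f) : (X - C a) ^ (m - 1) ∣ derivative f := by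
  obtain ⟨g, rfl⟩ := h
  rw [derivative_mul, derivative_pow, derivative_X_sub_C, mul_one]
  refine dvd_add (Dvd.dvd.mul_right ?_ g) (Dvd.dvd.mul_right ?_ (derivative g))
  · exact Dvd.dvd.mul_left dvd_rfl _
  · exact pow_dvd_pow _ (Nat.sub_le m 1)

lemma dvd_iterate_derivative {a : ℝ} {m : ℕ} {f : Polynomial ℝ}
    (h : (X - C a) ^ m ∣ f) (k : ℕ) : (X - C a) ^ (m - k) ∣ derivative^[k] f := by
  induction k with
  | zero => simpa using h
  | succ k ih =>
      rw [Function.iterate_succ_apply']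
      simpa [Nat.sub_sub] using dvd_derivative ih

lemma Wp_dvd (k : ℕ) (a : ℝ) (ha : a = 1 ∨ a = -1) : (X - C a) ^ k ∣ Wp k := by
  have : (X ^ 2 - 1 : Polynomial ℝ) = (X - C 1) * (X - C (-1)) := by
    simp; ring
  rw [Wp, this, mul_pow]
  rcases ha with rfl | rfl
  · exact Dvd.dvd.mul_right dvd_rfl _
  · exact Dvd.dvd.mul_left dvd_rfl _

lemma Wp_iter_eval_zero {k j : ℕ} (hj : j < k) {a : ℝ} (ha : a = 1 ∨ a = -1) :
    (derivative^[j] (Wp k)).eval a = 0 := by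
  have h := dvd_iterate_derivative (Wp_dvd k a ha) j
  have h1 : (X - C a) ∣ derivative^[j] (Wp k) :=
    dvd_trans (dvd_pow_self _ (by omega)) h
  simpa using eval_eq_zero_of_dvd_of_eval_eq_zero h1 (by simp)

lemma iter_parts {k j : ℕ} (hj : j ≤ k) (g : Polynomial ℝ) :
    ∫ x in (-1 : ℝ)..1, (derivative^[j] (Wp k)).eval x * g.eval x
      = (-1 : ℝ) ^ j * ∫ x in (-1 : ℝ)..1, (Wp k).eval x * (derivative^[j] g).eval x := by
  induction j generalizing g with
  | zero => simp
  | succ j ih =>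
      have hjk : j < k := hj
      rw [Function.iterate_succ_apply', integral_parts,
        Wp_iter_eval_zero hjk (Or.inl rfl), Wp_iter_eval_zero hjk (Or.inr rfl),
        zero_mul, zero_mul, sub_zero, zero_sub, ih (le_of_lt hjk) (derivative g),
        ← Function.iterate_succ_apply]
      ring


lemma Rp_natDegree_le (k : ℕ) : (Rp k).natDegree ≤ k := by
  have := natDegree_iterate_derivative (Wp k) k
  rwa [Wp_natDegree, two_mul, Nat.add_sub_cancel] at this

lemma Rp_coeff (k : ℕ) : (Rp k).coeff k = ((2 * k).descFactorial k : ℝ) := by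
  rw [Rp, coeff_iterate_derivative]
  have : (Wp k).coeff (k + k) = 1 := by
    have := (Wp_monic k).leadingCoeff
    rwa [leadingCoeff, Wp_natDegree, two_mul] at this
  rw [this, nsmul_eq_mul, mul_one, two_mul]

lemma Rp_orth {k : ℕ} (q : Polynomial ℝ) (hq : q.natDegree < k) :
    ∫ x in (-1 : ℝ)..1, (Rp k).eval x * q.eval x = 0 := by
  rw [Rp, iter_parts le_rfl, iterate_derivative_eq_zero hq]
  simp

lemma iter_Rp (k : ℕ) : derivative^[k] (Rp k) = C (((2 * k).factorial : ℝ)) := by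
  rw [Rp, ← Function.iterate_add_apply]
  have hdeg : (derivative^[k + k] (Wp k)).natDegree ≤ 0 := by
    have := natDegree_iterate_derivative (Wp k) (k + k)
    rw [Wp_natDegree] at this; omega
  rw [eq_C_of_natDegree_le_zero hdeg, coeff_iterate_derivative]
  have h1 : (Wp k).coeff (k + k) = 1 := by
    have := (Wp_monic k).leadingCoeff
    rwa [leadingCoeff, Wp_natDegree, two_mul] at this
  simp only [zero_add, h1, nsmul_eq_mul, mul_one]
  norm_num [two_mul, Nat.descFactorial_self]

lemma Rp_norm (k : ℕ) :
    ∫ x in (-1 : ℝ)..1, ((Rp k).eval x) ^ 2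
      = ((2 * k).factorial : ℝ) * ((-1 : ℝ) ^ k * ∫ x in (-1 : ℝ)..1, (Wp k).eval x) := by
  have h : ∫ x in (-1 : ℝ)..1, ((Rp k).eval x) ^ 2
      = ∫ x in (-1 : ℝ)..1, (derivative^[k] (Wp k)).eval x * (Rp k).eval x := by
    congr 1; ext x; rw [sq]; rfl
  rw [h]; rw [show Rp k = derivative^[k] (Wp k) from rfl, iter_parts le_rfl,
    show derivative^[k] (derivative^[k] (Wp k)) = derivative^[k] (Rp k) from rfl, iter_Rp]
  simp only [eval_C]
  rw [intervalIntegral.integral_mul_const]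
  ring


/-- The recurrence for `I k = ∫ (x²-1)^k`. -/
lemma Wp_integral_rec (k : ℕ) :
    (2 * (k : ℝ) + 3) * ∫ x in (-1 : ℝ)..1, (Wp (k + 1)).eval x
      = -(2 * (k : ℝ) + 2) * ∫ x in (-1 : ℝ)..1, (Wp k).eval x := by
  have hd : derivative (X * Wp (k + 1))
      = C (2 * (k : ℝ) + 3) * Wp (k + 1) + C (2 * (k : ℝ) + 2) * Wp k := by
    simp only [Wp, derivative_mul, derivative_X, derivative_pow, derivative_sub,
      derivative_one, derivative_X_pow, Nat.add_sub_cancel, C_add, C_mul, Polynomial.C_eq_natCast,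
      Nat.cast_ofNat, map_ofNat, C_1, sub_zero, one_mul, Nat.cast_add, Nat.cast_one,
      pow_one]
    push_cast
    ring
  have h := integral_derivative (X * Wp (k + 1))
  rw [hd] at h
  have heval : ∀ a : ℝ, a = 1 ∨ a = -1 → (X * Wp (k + 1)).eval a = 0 := by
    rintro a (rfl | rfl) <;> simp [Wp]
  rw [heval 1 (Or.inl rfl), heval (-1) (Or.inr rfl), sub_zero] at h
  have hsplit : ∫ x in (-1 : ℝ)..1,
      (C (2 * (k : ℝ) + 3) * Wp (k + 1) + C (2 * (k : ℝ) + 2) * Wp k).eval x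
      = (2 * (k : ℝ) + 3) * (∫ x in (-1 : ℝ)..1, (Wp (k + 1)).eval x)
        + (2 * (k : ℝ) + 2) * ∫ x in (-1 : ℝ)..1, (Wp k).eval x := by
    rw [← intervalIntegral.integral_const_mul, ← intervalIntegral.integral_const_mul,
      ← intervalIntegral.integral_add]
    · simp
    · simpa [eval_mul] using poly_intervalIntegrable (C (2 * (k : ℝ) + 3) * Wp (k + 1))
    · simpa [eval_mul] using poly_intervalIntegrable (C (2 * (k : ℝ) + 2) * Wp k)
  rw [hsplit] at h
  linarith

lemma Wp_integral_val (k : ℕ) :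
    ((2 * (k : ℝ) + 1) * ((2 * k).factorial : ℝ)) *
      ((-1 : ℝ) ^ k * ∫ x in (-1 : ℝ)..1, (Wp k).eval x)
      = 2 * 4 ^ k * ((k.factorial : ℝ)) ^ 2 := by
  induction k with
  | zero => norm_num [Wp]
  | succ k ih =>
      have hrec := Wp_integral_rec k
      have hfac : ((2 * (k + 1)).factorial : ℝ)
          = (2 * (k : ℝ) + 2) * (2 * (k : ℝ) + 1) * ((2 * k).factorial : ℝ) := by
        have : 2 * (k + 1) = (2 * k + 1) + 1 := by ring
        rw [this, Nat.factorial_succ, Nat.factorial_succ]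
        push_cast; ring
      have hfac2 : ((k + 1).factorial : ℝ) = ((k : ℝ) + 1) * (k.factorial : ℝ) := by
        rw [Nat.factorial_succ]; push_cast; ring
      have he : ((-1 : ℝ) ^ k) ^ 2 = 1 := by
        rw [← pow_mul, mul_comm, pow_mul]; norm_num
      rw [hfac]
      push_cast [hfac2, pow_succ]
      linear_combination (-(2*(k:ℝ)+2)*(2*(k:ℝ)+1)*((2*k).factorial : ℝ)*(-1:ℝ)^k) * hrec
        + (2*(k:ℝ)+2)^2 * ih

lemma Rp_norm_val (k : ℕ) :
    (2 * (k : ℝ) + 1) * ∫ x in (-1 : ℝ)..1, ((Rp k).eval x) ^ 2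
      = 2 * (2 ^ k * (k.factorial : ℝ)) ^ 2 := by
  rw [Rp_norm]
  have h := Wp_integral_val k
  have h4 : (4 : ℝ) ^ k = (2 ^ k) ^ 2 := by
    rw [show (4:ℝ) = 2 ^ 2 by norm_num, ← pow_mul, ← pow_mul, mul_comm]
  linear_combination h + 2 * ((k.factorial : ℝ)) ^ 2 * h4

lemma Rp_norm_pos (k : ℕ) : 0 < ∫ x in (-1 : ℝ)..1, ((Rp k).eval x) ^ 2 := by
  have h := Rp_norm_val k
  have h1 : (0 : ℝ) < 2 * (k : ℝ) + 1 := by positivity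
  have h2 : (0 : ℝ) < 2 * (2 ^ k * (k.factorial : ℝ)) ^ 2 := by positivity
  nlinarith



lemma Wp_factor (k : ℕ) : Wp k = (X - C 1) ^ k * (X - C (-1)) ^ k := by
  rw [Wp, ← mul_pow]
  congr 1
  simp; ring

lemma Rp_eval_sq (k : ℕ) {a : ℝ} (ha : a = 1 ∨ a = -1) :
    ((Rp k).eval a) ^ 2 = (2 ^ k * (k.factorial : ℝ)) ^ 2 := by
  have hsum : Rp k = ∑ i ∈ range (k + 1),
      k.choose i • (derivative^[k - i] ((X - C (1:ℝ)) ^ k) * derivative^[i] ((X - C (-1:ℝ)) ^ k)) := by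
    rw [Rp, Wp_factor, iterate_derivative_mul]
  have heval : ∀ b c : ℝ, ∀ i ∈ range (k + 1),
      ((derivative^[k - i] ((X - C b) ^ k) * derivative^[i] ((X - C c) ^ k)).eval a)
      = (k.descFactorial (k - i) : ℝ) * (a - b) ^ i *
        ((k.descFactorial i : ℝ) * (a - c) ^ (k - i)) := by
    intro b c i hi
    rw [iterate_derivative_X_sub_pow, iterate_derivative_X_sub_pow]
    simp only [eval_mul, eval_smul, smul_eq_mul, eval_pow, eval_sub, eval_X, eval_C]
    rw [Nat.sub_sub_self (Finset.mem_range_succ_iff.mp hi)]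
    ring
  rcases ha with rfl | rfl
  · -- at 1 : only i = 0 survives since (1 - 1)^i = 0 for i > 0
    have : (Rp k).eval 1 = 2 ^ k * (k.factorial : ℝ) := by
      rw [hsum, eval_finset_sum]
      rw [Finset.sum_eq_single 0]
      · simp only [eval_smul]
        rw [heval 1 (-1) 0 (by simp)]
        simp only [nsmul_eq_mul, Nat.choose_zero_right, Nat.sub_zero, Nat.descFactorial_self,
          Nat.descFactorial_zero, one_smul]
        norm_num
        ring
      · intro i hi hne
        simp only [eval_smul]
        rw [heval 1 (-1) i hi]
        simp [zero_pow hne]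
      · intro h; simp at h
    rw [this]
  · have : (Rp k).eval (-1) = (-2) ^ k * (k.factorial : ℝ) := by
      rw [hsum, eval_finset_sum]
      rw [Finset.sum_eq_single k]
      · simp only [eval_smul]
        rw [heval 1 (-1) k (by simp)]
        simp only [nsmul_eq_mul, Nat.choose_self, Nat.sub_self, Nat.descFactorial_zero,
          Nat.descFactorial_self, one_smul]
        norm_num
      · intro i hi hne
        simp only [eval_smul]
        rw [heval 1 (-1) i hi]
        have h0 : k - i ≠ 0 := by simp at hi; omega
        simp [zero_pow h0]
      · intro h; simp at h
    rw [this, mul_pow, mul_pow, ← pow_mul, ← pow_mul, mul_comm k 2, pow_mul, pow_mul]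
    norm_num


lemma Rp_coeff_ne (k : ℕ) : (Rp k).coeff k ≠ 0 := by
  rw [Rp_coeff]
  have h3 := Nat.choose_pos (show k ≤ 2 * k by omega)
  have h4 := Nat.factorial_pos k
  rw [Nat.descFactorial_eq_factorial_mul_choose]
  positivity

lemma Rp_expand (m : ℕ) : ∀ f : Polynomial ℝ, f.natDegree ≤ m →
    ∃ c : ℕ → ℝ, f = ∑ k ∈ range (m + 1), C (c k) * Rp k := by
  induction m with
  | zero =>
      intro f hf
      refine ⟨fun _ => f.coeff 0 / (Rp 0).coeff 0, ?_⟩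
      have h0 : Rp 0 = C ((Rp 0).coeff 0) := eq_C_of_natDegree_le_zero (Rp_natDegree_le 0)
      conv_lhs => rw [eq_C_of_natDegree_le_zero hf]
      rw [range_one, sum_singleton]
      nth_rewrite 2 [h0]
      rw [← C_mul, div_mul_cancel₀ _ (Rp_coeff_ne 0)]
  | succ m ih =>
      intro f hf
      set d : ℝ := f.coeff (m + 1) / (Rp (m + 1)).coeff (m + 1) with hd
      have hg : (f - C d * Rp (m + 1)).natDegree ≤ m := by
        rw [natDegree_le_iff_coeff_eq_zero]
        intro i hi
        rcases Nat.lt_or_ge (m + 1) i with h | h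
        · rw [coeff_sub, coeff_eq_zero_of_natDegree_lt (lt_of_le_of_lt hf h),
            coeff_C_mul, coeff_eq_zero_of_natDegree_lt
              (lt_of_le_of_lt (Rp_natDegree_le (m + 1)) h), mul_zero, sub_zero]
        · have : i = m + 1 := by omega
          subst this
          rw [coeff_sub, coeff_C_mul, hd, div_mul_cancel₀ _ (Rp_coeff_ne (m + 1)), sub_self]
      obtain ⟨c, hc⟩ := ih _ hg
      refine ⟨fun k => if k = m + 1 then d else c k, ?_⟩
      rw [Finset.sum_range_succ]
      have : ∑ k ∈ range (m + 1), C (if k = m + 1 then d else c k) * Rp k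
          = ∑ k ∈ range (m + 1), C (c k) * Rp k := by
        refine Finset.sum_congr rfl fun k hk => ?_
        rw [if_neg (by simp at hk; omega)]
      rw [this, ← hc]
      beta_reduce
      rw [if_pos rfl]
      ring


lemma sum_odd (m : ℕ) : ∑ j ∈ range m, (2 * (j : ℝ) + 1) = (m : ℝ) ^ 2 := by
  induction m with
  | zero => simp
  | succ m ih => rw [Finset.sum_range_succ, ih]; push_cast; ring

/-- Let `-1 ≤ n ≤ p` be integers and let `θ` be a real polynomial of degree at most `p`
which is `L²(-1,1)`-orthogonal to every polynomial of degree at most `n` (vacuous when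
`n = -1`).  Then for `x₀ ∈ {-1, 1}`,
`|θ(x₀)|² ≤ ((p-n)(p+n+2)/2) ⬝ ∫_{-1}^{1} θ(x)² dx`. -/
theorem endpoint_bound_orthogonal_polynomial
    (p n : ℤ) (hn : -1 ≤ n) (hnp : n ≤ p)
    (θ : Polynomial ℝ)
    (hθ : θ = 0 ∨ (θ.natDegree : ℤ) ≤ p)
    (horth : ∀ q : Polynomial ℝ, (q.natDegree : ℤ) ≤ n →
      ∫ x in (-1 : ℝ)..1, θ.eval x * q.eval x = 0)
    (x₀ : ℝ) (hx₀ : x₀ = -1 ∨ x₀ = 1) :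
    (θ.eval x₀) ^ 2 ≤
      (((p - n) * (p + n + 2) : ℤ) : ℝ) / 2 *
        ∫ x in (-1 : ℝ)..1, (θ.eval x) ^ 2 := by
  by_cases hzero : θ = 0
  · subst hzero; simp
  have hdeg : (θ.natDegree : ℤ) ≤ p := hθ.resolve_left hzero
  have hp0 : 0 ≤ p := le_trans (Int.ofNat_nonneg _) hdeg
  set P : ℕ := p.toNat with hP
  set N : ℕ := (n + 1).toNat with hN
  have hPz : (P : ℤ) = p := Int.toNat_of_nonneg hp0
  have hNz : (N : ℤ) = n + 1 := Int.toNat_of_nonneg (by omega)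
  have hNP : N ≤ P + 1 := by omega
  have hdegP : θ.natDegree ≤ P := by omega
  obtain ⟨c, hc⟩ := Rp_expand P θ hdegP
  -- inner products with Rp j
  have hRR : ∀ k j : ℕ, k ≠ j →
      ∫ x in (-1 : ℝ)..1, (Rp k).eval x * (Rp j).eval x = 0 := by
    intro k j hkj
    rcases Nat.lt_or_ge k j with h | h
    · have := Rp_orth (Rp k) (lt_of_le_of_lt (Rp_natDegree_le k) h)
      rw [← this]
      congr 1; funext x; ring
    · exact Rp_orth (Rp j) (lt_of_le_of_lt (Rp_natDegree_le j) (by omega))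
  have hip : ∀ j : ℕ, ∫ x in (-1 : ℝ)..1, θ.eval x * (Rp j).eval x
      = (if j ∈ range (P + 1) then c j else 0) * ∫ x in (-1 : ℝ)..1, ((Rp j).eval x) ^ 2 := by
    intro j
    conv_lhs => rw [hc]
    have h1 : ∀ x : ℝ, (∑ k ∈ range (P + 1), C (c k) * Rp k).eval x * (Rp j).eval x
        = ∑ k ∈ range (P + 1), c k * ((Rp k).eval x * (Rp j).eval x) := by
      intro x
      rw [eval_finset_sum, Finset.sum_mul]
      exact Finset.sum_congr rfl fun k _ => by simp [eval_mul]; ring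
    rw [intervalIntegral.integral_congr (g := fun x =>
        ∑ k ∈ range (P + 1), c k * ((Rp k).eval x * (Rp j).eval x)) (fun x _ => h1 x)]
    rw [intervalIntegral.integral_finset_sum (fun k _ => by
      simpa [eval_mul, mul_assoc] using poly_intervalIntegrable (C (c k) * (Rp k * Rp j)))]
    have h2 : ∀ k ∈ range (P + 1),
        ∫ x in (-1 : ℝ)..1, c k * ((Rp k).eval x * (Rp j).eval x)
        = c k * ∫ x in (-1 : ℝ)..1, (Rp k).eval x * (Rp j).eval x := fun k _ =>
      intervalIntegral.integral_const_mul _ _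
    rw [Finset.sum_congr rfl h2]
    by_cases hj : j ∈ range (P + 1)
    · rw [Finset.sum_eq_single j (fun k _ hkj => by rw [hRR k j hkj, mul_zero]) (fun h => absurd hj h)]
      rw [if_pos hj]
      congr 1
      congr 1; funext x; rw [sq]
    · rw [if_neg hj, zero_mul]
      apply Finset.sum_eq_zero
      intro k hk
      have : k ≠ j := fun h => hj (h ▸ hk)
      rw [hRR k j this, mul_zero]
  -- coefficients below N vanish
  have hcz : ∀ j, j < N → c j = 0 := by
    intro j hj
    have hjn : ((Rp j).natDegree : ℤ) ≤ n := by
      have := Rp_natDegree_le j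
      omega
    have h0 := horth (Rp j) hjn
    rw [hip j] at h0
    rw [if_pos (mem_range.mpr (by omega))] at h0
    exact (mul_eq_zero.mp h0).resolve_right (ne_of_gt (Rp_norm_pos j))
  -- value at x₀
  have hval : θ.eval x₀ = ∑ j ∈ Finset.Ico N (P + 1), c j * (Rp j).eval x₀ := by
    conv_lhs => rw [hc]
    rw [eval_finset_sum]
    rw [Finset.range_eq_Ico]
    rw [← Finset.sum_Ico_consecutive _ (Nat.zero_le N) hNP]
    have : ∑ j ∈ Finset.Ico 0 N, (C (c j) * Rp j).eval x₀ = 0 := by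
      apply Finset.sum_eq_zero
      intro j hj
      simp only [Finset.mem_Ico] at hj
      simp [eval_mul, hcz j hj.2]
    rw [this, zero_add]
    exact Finset.sum_congr rfl fun j _ => by simp [eval_mul]
  -- norm identity
  have hnorm : ∑ j ∈ Finset.Ico N (P + 1), c j ^ 2 * ∫ x in (-1 : ℝ)..1, ((Rp j).eval x) ^ 2
      = ∫ x in (-1 : ℝ)..1, (θ.eval x) ^ 2 := by
    have hterm : ∀ j ∈ range (P + 1),
        c j ^ 2 * ∫ x in (-1 : ℝ)..1, ((Rp j).eval x) ^ 2
        = ∫ x in (-1 : ℝ)..1, c j * (θ.eval x * (Rp j).eval x) := by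
      intro j hj
      rw [intervalIntegral.integral_const_mul, hip j, if_pos hj, sq]
      ring
    have hfull : ∑ j ∈ range (P + 1), c j ^ 2 * ∫ x in (-1 : ℝ)..1, ((Rp j).eval x) ^ 2
        = ∫ x in (-1 : ℝ)..1, (θ.eval x) ^ 2 := by
      rw [Finset.sum_congr rfl hterm,
        ← intervalIntegral.integral_finset_sum (fun j _ => by
          simpa [eval_mul, mul_assoc] using poly_intervalIntegrable (C (c j) * (θ * Rp j)))]
      apply intervalIntegral.integral_congr
      intro x _
      simp only []
      have : ∑ j ∈ range (P + 1), c j * (θ.eval x * (Rp j).eval x)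
          = θ.eval x * ∑ j ∈ range (P + 1), c j * (Rp j).eval x := by
        rw [Finset.mul_sum]; exact Finset.sum_congr rfl fun j _ => by ring
      rw [this]
      have hx : ∑ j ∈ range (P + 1), c j * (Rp j).eval x = θ.eval x := by
        conv_rhs => rw [hc]
        rw [eval_finset_sum]
        exact Finset.sum_congr rfl fun j _ => by simp [eval_mul]
      rw [hx, sq]
    rw [← hfull, Finset.range_eq_Ico,
      ← Finset.sum_Ico_consecutive _ (Nat.zero_le N) hNP]
    have : ∑ j ∈ Finset.Ico 0 N, c j ^ 2 * ∫ x in (-1 : ℝ)..1, ((Rp j).eval x) ^ 2 = 0 := by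
      apply Finset.sum_eq_zero
      intro j hj
      simp only [Finset.mem_Ico] at hj
      rw [hcz j hj.2]; ring
    rw [this, zero_add]
  -- Cauchy-Schwarz
  set s := Finset.Ico N (P + 1) with hs
  set w : ℕ → ℝ := fun j => ∫ x in (-1 : ℝ)..1, ((Rp j).eval x) ^ 2 with hw
  have hwpos : ∀ j, 0 < w j := Rp_norm_pos
  have hCS := Finset.sum_mul_sq_le_sq_mul_sq s
    (fun j => (Rp j).eval x₀ / Real.sqrt (w j)) (fun j => c j * Real.sqrt (w j))
  have hfg : ∀ j ∈ s, ((Rp j).eval x₀ / Real.sqrt (w j)) * (c j * Real.sqrt (w j))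
      = c j * (Rp j).eval x₀ := by
    intro j _
    have : Real.sqrt (w j) ≠ 0 := ne_of_gt (Real.sqrt_pos.mpr (hwpos j))
    field_simp
  have hf2 : ∀ j ∈ s, ((Rp j).eval x₀ / Real.sqrt (w j)) ^ 2 = (2 * (j : ℝ) + 1) / 2 := by
    intro j _
    rw [div_pow, Real.sq_sqrt (hwpos j).le, Rp_eval_sq j hx₀.symm]
    have h1 := Rp_norm_val j
    have h2 := hwpos j
    rw [hw]
    field_simp
    rw [div_eq_iff (ne_of_gt (Rp_norm_pos j))]
    linarith [h1]
  have hg2 : ∀ j ∈ s, (c j * Real.sqrt (w j)) ^ 2 = c j ^ 2 * w j := by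
    intro j _
    rw [mul_pow, Real.sq_sqrt (hwpos j).le]
  have hK : ∑ j ∈ s, (2 * (j : ℝ) + 1) / 2 = (((P : ℝ) + 1) ^ 2 - (N : ℝ) ^ 2) / 2 := by
    rw [hs, Finset.sum_Ico_eq_sub _ hNP, ← Finset.sum_div, ← Finset.sum_div, sum_odd, sum_odd]
    push_cast
    ring
  have hconst : (((p - n) * (p + n + 2) : ℤ) : ℝ) = ((P : ℝ) + 1) ^ 2 - (N : ℝ) ^ 2 := by
    have hp' : (p : ℝ) = (P : ℝ) := by exact_mod_cast hPz.symm
    have hNzR : ((N : ℝ)) = (n : ℝ) + 1 := by exact_mod_cast hNz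
    have hn' : (n : ℝ) = (N : ℝ) - 1 := by linarith
    push_cast
    rw [hp', hn']
    ring
  calc (θ.eval x₀) ^ 2
      = (∑ j ∈ s, ((Rp j).eval x₀ / Real.sqrt (w j)) * (c j * Real.sqrt (w j))) ^ 2 := by
        rw [Finset.sum_congr rfl hfg, hval]
    _ ≤ (∑ j ∈ s, ((Rp j).eval x₀ / Real.sqrt (w j)) ^ 2)
          * ∑ j ∈ s, (c j * Real.sqrt (w j)) ^ 2 := hCS
    _ = (((p - n) * (p + n + 2) : ℤ) : ℝ) / 2 * ∫ x in (-1 : ℝ)..1, (θ.eval x) ^ 2 := by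
        rw [Finset.sum_congr rfl hf2, Finset.sum_congr rfl hg2, hK, hnorm, hconst]

end LegendreAux
end

section
/- Let p, n be integers with −1 ≤ n < p. Then there exists a nonzero real polynomial θ in two variables of total degree at most p on the reference triangle T̂ = {(r, s) : −1 ≤ r, −1 ≤ s, r + s ≤ 0}, L²(T̂)-orthogonal to all polynomials of total degree at most n, such that ∫_{−1}^{1} θ(r, −1)² dr = ((p−n)(p+n+3)/2) · ∫_{T̂} θ² , i.e. the constant (p−n)(p+n+3)/2 in the inverse trace inequality on the reference triangle is attained. -/
namespace TraceSharp
open Polynomial MeasureTheory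

noncomputable def W (a : ℕ) : ℝ[X] := (X ^ 2 - 1) ^ a

lemma poly_ftc (u : ℝ[X]) (a b : ℝ) :
    ∫ x in a..b, Polynomial.eval x (derivative u) = u.eval b - u.eval a := by
  refine intervalIntegral.integral_eq_sub_of_hasDerivAt (fun x _ => u.hasDerivAt x) ?_
  exact ((derivative u).continuous).intervalIntegrable a b

lemma poly_parts (u v : ℝ[X]) (a b : ℝ) :
    ∫ x in a..b, Polynomial.eval x (derivative u) * Polynomial.eval x v
      = (eval b u * eval b v - eval a u * eval a v)
        - ∫ x in a..b, Polynomial.eval x u * Polynomial.eval x (derivative v) := by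
  have h := poly_ftc (u * v) a b
  rw [derivative_mul] at h
  have h1 : (∫ x in a..b, Polynomial.eval x (derivative u * v + u * derivative v))
      = (∫ x in a..b, Polynomial.eval x (derivative u) * Polynomial.eval x v)
        + ∫ x in a..b, Polynomial.eval x u * Polynomial.eval x (derivative v) := by
    rw [← intervalIntegral.integral_add (f := fun x => Polynomial.eval x (derivative u) * Polynomial.eval x v)
      (g := fun x => Polynomial.eval x u * Polynomial.eval x (derivative v))
      (((derivative u).continuous.mul v.continuous).intervalIntegrable a b)
      ((u.continuous.mul (derivative v).continuous).intervalIntegrable a b)]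
    simp
  rw [h1] at h
  simp only [eval_mul] at h
  linarith

lemma iterate_derivative_W_dvd (m k : ℕ) (hk : k ≤ m) :
    ∃ g : ℝ[X], derivative^[k] (W m) = (X ^ 2 - 1) ^ (m - k) * g := by
  induction k with
  | zero => exact ⟨1, by simp [W]⟩
  | succ k ih =>
    obtain ⟨g, hg⟩ := ih (Nat.le_of_succ_le hk)
    have hmk : m - k = (m - (k + 1)) + 1 := by omega
    refine ⟨(C ((m - k : ℕ) : ℝ)) * derivative (X ^ 2 - 1) * g + (X ^ 2 - 1) * derivative g, ?_⟩
    rw [Function.iterate_succ_apply', hg, derivative_mul, derivative_pow,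
      show m - k - 1 = m - (k+1) from by omega, hmk]
    ring

lemma eval_iterate_derivative_W_eq_zero (m k : ℕ) (hk : k < m) {x : ℝ} (hx : x ^ 2 = 1) :
    Polynomial.eval x (derivative^[k] (W m)) = 0 := by
  obtain ⟨g, hg⟩ := iterate_derivative_W_dvd m k hk.le
  have h0 : m - k ≠ 0 := by omega
  rw [hg]
  simp [hx, zero_pow h0]

lemma ortho_aux (m : ℕ) : ∀ k, k ≤ m → ∀ h : ℝ[X], (h = 0 ∨ h.natDegree < k) →
    ∫ x in (-1:ℝ)..1, Polynomial.eval x (derivative^[k] (W m)) * Polynomial.eval x h = 0 := by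
  intro k
  induction k with
  | zero =>
    rintro - h (rfl | hd)
    · simp
    · omega
  | succ k ih =>
    rintro hk h (rfl | hd)
    · simp
    · rw [Function.iterate_succ_apply', poly_parts]
      rw [eval_iterate_derivative_W_eq_zero m k (by omega) (by norm_num),
        eval_iterate_derivative_W_eq_zero m k (by omega) (by norm_num)]
      have hz : ∫ x in (-1:ℝ)..1,
          Polynomial.eval x (derivative^[k] (W m)) * Polynomial.eval x (derivative h) = 0 := by
        rcases eq_or_ne h.natDegree 0 with h0 | h0
        · rw [eq_C_of_natDegree_eq_zero h0]
          simp
        · exact ih (by omega) _ (Or.inr (by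
            have := natDegree_derivative_lt (p := h) h0
            omega))
      rw [hz]
      ring

lemma iter_add (k : ℕ) (v w : ℝ[X]) :
    derivative^[k] (v + w) = derivative^[k] v + derivative^[k] w := by
  induction k generalizing v w with
  | zero => rfl
  | succ k ih =>
    rw [Function.iterate_succ_apply, Function.iterate_succ_apply,
      Function.iterate_succ_apply derivative k w, derivative_add, ih]

lemma iterate_derivative_X_mul (k : ℕ) (u : ℝ[X]) :
    derivative^[k] (X * u)
      = X * derivative^[k] u + (k : ℕ) • derivative^[k - 1] u := by
  induction k generalizing u with
  | zero => simp
  | succ k ih =>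
    have hstep : derivative (X * u) = u + X * derivative u := by
      rw [derivative_mul, derivative_X, one_mul]
    rw [Function.iterate_succ_apply, hstep, iter_add, ih (derivative u),
      ← Function.iterate_succ_apply derivative k u, Nat.add_sub_cancel]
    cases k with
    | zero => simp; ring
    | succ j =>
      rw [show j + 1 - 1 = j from rfl, ← Function.iterate_succ_apply derivative j u]
      rw [succ_nsmul]
      module

lemma eval_S_neg_one (a : ℕ) :
    Polynomial.eval (-1 : ℝ) (derivative^[a] (W a))
      = (-1) ^ a * 2 ^ a * (a.factorial : ℝ) := by
  induction a with
  | zero => simp [W]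
  | succ a ih =>
    have hd : derivative (W (a + 1)) = (((a:ℝ) + 1) * 2) • (X * W a) := by
      rw [W, derivative_pow]
      simp only [derivative_sub, derivative_one, derivative_X_pow, W]
      rw [smul_eq_C_mul]
      simp only [map_mul, map_add, map_one, map_natCast, map_ofNat, pow_one]
      rw [show a + 1 - 1 = a from rfl, show 2 - 1 = 1 from rfl]
      push_cast
      ring
    have h2 : Polynomial.eval (-1:ℝ) (derivative^[a+1] (W (a+1)))
        = ((a:ℝ)+1) * 2 * ((-1) * Polynomial.eval (-1:ℝ) (derivative^[a] (W a))
            + (a:ℕ) • Polynomial.eval (-1:ℝ) (derivative^[a-1] (W a))) := by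
      rw [Function.iterate_succ_apply, hd, iterate_derivative_smul, iterate_derivative_X_mul]
      simp [smul_eq_mul]
      ring
    rw [h2, ih]
    rcases Nat.eq_zero_or_pos a with rfl | ha
    · norm_num [W]
    · rw [eval_iterate_derivative_W_eq_zero a (a-1) (by omega) (by norm_num)]
      rw [Nat.factorial_succ]
      push_cast
      ring

lemma eval_Q_neg_one (a : ℕ) :
    2 * Polynomial.eval (-1 : ℝ) (derivative^[a + 1] (W a))
      = (-1) ^ (a+1) * a * ((a+1).factorial : ℝ) * 2 ^ a := by
  induction a with
  | zero => simp [W]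
  | succ a ih =>
    have hd : derivative (W (a + 1)) = (((a:ℝ) + 1) * 2) • (X * W a) := by
      rw [W, derivative_pow]
      simp only [derivative_sub, derivative_one, derivative_X_pow, W]
      rw [smul_eq_C_mul]
      simp only [map_mul, map_add, map_one, map_natCast, map_ofNat, pow_one]
      rw [show a + 1 - 1 = a from rfl, show 2 - 1 = 1 from rfl]
      push_cast
      ring
    have h2 : Polynomial.eval (-1:ℝ) (derivative^[a+1+1] (W (a+1)))
        = ((a:ℝ)+1) * 2 * ((-1) * Polynomial.eval (-1:ℝ) (derivative^[a+1] (W a))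
            + ((a:ℕ)+1) • Polynomial.eval (-1:ℝ) (derivative^[a] (W a))) := by
      rw [Function.iterate_succ_apply, hd, iterate_derivative_smul,
        iterate_derivative_X_mul (a+1)]
      simp [smul_eq_mul]
      ring
    rw [h2, eval_S_neg_one a]
    have : Polynomial.eval (-1:ℝ) (derivative^[a+1] (W a))
        = ((-1) ^ (a+1) * a * ((a+1).factorial : ℝ) * 2 ^ a) / 2 := by linarith
    rw [this]
    rw [Nat.factorial_succ (a+1), Nat.factorial_succ a]
    push_cast
    ring

noncomputable def Qp (a : ℕ) : ℝ[X] := derivative^[a + 1] (W a)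
noncomputable def Sp (a : ℕ) : ℝ[X] := derivative^[a] (W a)

lemma Qp_zero : Qp 0 = 0 := by
  simp [Qp, W]

lemma Qp_degle (a : ℕ) : (Qp a).natDegree ≤ a - 1 := by
  cases a with
  | zero => simp [Qp_zero]
  | succ a =>
    have h1 : (W (a+1)).natDegree ≤ 2 * (a + 1) := by
      have : (X ^ 2 - 1 : ℝ[X]).natDegree ≤ 2 := by
        refine le_trans (natDegree_sub_le _ _) ?_
        simp [natDegree_X_pow]
      refine le_trans (natDegree_pow_le) ?_
      calc (a+1) * (X ^ 2 - 1 : ℝ[X]).natDegree ≤ (a+1) * 2 := by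
            exact Nat.mul_le_mul_left _ this
        _ = 2 * (a+1) := by ring
    have := natDegree_iterate_derivative (W (a+1)) (a + 1 + 1)
    have : (Qp (a+1)).natDegree ≤ (W (a+1)).natDegree - (a + 1 + 1) := this
    omega

lemma Qp_deg (a : ℕ) : Qp a = 0 ∨ (Qp a).natDegree < a := by
  cases a with
  | zero => exact Or.inl Qp_zero
  | succ a => exact Or.inr (by have := Qp_degle (a+1); omega)

lemma key (a : ℕ) (h : ℝ[X]) (hh : h = 0 ∨ h.natDegree < a) :
    ∫ x in (-1:ℝ)..1, Polynomial.eval x ((1 - X) * h * Qp a)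
      = -(2 * Polynomial.eval (-1) h * Polynomial.eval (-1) (Sp a)) := by
  have hQ : Qp a = derivative (Sp a) := by
    rw [Qp, Sp, Function.iterate_succ_apply']
  have hcomm : (∫ x in (-1:ℝ)..1,
        Polynomial.eval x ((1 - X) * h * Qp a))
      = ∫ x in (-1:ℝ)..1,
        Polynomial.eval x (derivative (Sp a)) * Polynomial.eval x ((1 - X) * h) := by
    rw [hQ]
    congr 1
    ext x
    simp only [eval_mul]
    ring
  rw [hcomm, poly_parts]
  have hv1 : Polynomial.eval (1:ℝ) ((1 - X) * h) = 0 := by simp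
  have hvm : Polynomial.eval (-1:ℝ) ((1 - X) * h) = 2 * Polynomial.eval (-1) h := by
    rw [eval_mul, eval_sub, eval_one, eval_X]; ring
  have hz : ∫ x in (-1:ℝ)..1,
      Polynomial.eval x (Sp a) * Polynomial.eval x (derivative ((1 - X) * h)) = 0 := by
    refine ortho_aux a a le_rfl _ ?_
    rcases hh with rfl | hd
    · left; simp
    · rcases eq_or_ne ((1 - X : ℝ[X]) * h).natDegree 0 with h0 | h0
      · left
        rw [eq_C_of_natDegree_eq_zero h0]
        simp
      · right
        have hlt := natDegree_derivative_lt (p := (1 - X : ℝ[X]) * h) h0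
        have hle : ((1 - X : ℝ[X]) * h).natDegree ≤ 1 + h.natDegree := by
          refine le_trans (natDegree_mul_le) ?_
          have : (1 - X : ℝ[X]).natDegree ≤ 1 := by
            refine le_trans (natDegree_sub_le _ _) ?_
            simp
          omega
        omega
  rw [hz, hv1, hvm]
  ring

variable (nn pp : ℕ)

noncomputable def ff (nn pp : ℕ) : ℝ[X] :=
  C ((-1:ℝ) ^ (pp + 1) / (2 ^ pp * pp.factorial))
      * Qp pp
    - C ((-1:ℝ) ^ (nn + 1) / (2 ^ nn * nn.factorial)) * Qp nn

lemma ff_deg (hnp : nn < pp) : (ff nn pp).natDegree < pp := by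
  have h1 : (ff nn pp).natDegree
      ≤ max ((C ((-1:ℝ) ^ (pp + 1) / (2 ^ pp * pp.factorial)) * Qp pp).natDegree)
          ((C ((-1:ℝ) ^ (nn + 1) / (2 ^ nn * nn.factorial)) * Qp nn).natDegree) :=
    natDegree_sub_le _ _
  have h2 := natDegree_C_mul_le ((-1:ℝ) ^ (pp + 1) / (2 ^ pp * pp.factorial)) (Qp pp)
  have h3 := natDegree_C_mul_le ((-1:ℝ) ^ (nn + 1) / (2 ^ nn * nn.factorial)) (Qp nn)
  have h4 := Qp_degle pp
  have h5 := Qp_degle nn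
  omega

lemma integral_split (u v : ℝ[X]) (c d : ℝ) (w : ℝ[X]) :
    ∫ x in (-1:ℝ)..1, Polynomial.eval x (w * (C c * u - C d * v))
      = c * (∫ x in (-1:ℝ)..1, Polynomial.eval x (w * u))
        - d * ∫ x in (-1:ℝ)..1, Polynomial.eval x (w * v) := by
  rw [← intervalIntegral.integral_const_mul, ← intervalIntegral.integral_const_mul,
    ← intervalIntegral.integral_sub]
  · congr 1
    ext x
    simp
    ring
  · exact (continuous_const.mul (w * u).continuous).intervalIntegrable _ _
  · exact (continuous_const.mul (w * v).continuous).intervalIntegrable _ _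

lemma neg_one_pow_mul_self (k : ℕ) : ((-1:ℝ) ^ k) * ((-1:ℝ) ^ k) = 1 := by
  rw [← pow_add]
  exact Even.neg_one_pow ⟨k, rfl⟩

lemma fact_ne (k : ℕ) : ((k.factorial : ℝ)) ≠ 0 := by
  exact_mod_cast k.factorial_ne_zero

lemma t1 (k : ℕ) :
    (-1:ℝ) ^ (k+1) / (2 ^ k * k.factorial)
        * ((-1) ^ (k+1) * k * (((k+1).factorial : ℝ)) * 2 ^ k / 2)
      = k * (k + 1) / 2 := by
  rw [Nat.factorial_succ]
  have h2 : (2:ℝ) ^ k ≠ 0 := by positivity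
  have h3 := fact_ne k
  rcases Nat.even_or_odd (k+1) with he | ho
  · rw [he.neg_one_pow]
    push_cast
    field_simp <;> ring
  · rw [ho.neg_one_pow]
    push_cast
    field_simp <;> ring

lemma ff_eval_neg_one :
    Polynomial.eval (-1:ℝ) (ff nn pp)
      = ((pp:ℝ) * (pp + 1) - nn * (nn + 1)) / 2 := by
  have hp := eval_Q_neg_one pp
  have hn := eval_Q_neg_one nn
  have hEp : Polynomial.eval (-1:ℝ) (Qp pp)
      = (-1) ^ (pp+1) * pp * ((pp+1).factorial : ℝ) * 2 ^ pp / 2 := by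
    rw [Qp]; linarith
  have hEn : Polynomial.eval (-1:ℝ) (Qp nn)
      = (-1) ^ (nn+1) * nn * ((nn+1).factorial : ℝ) * 2 ^ nn / 2 := by
    rw [Qp]; linarith
  rw [ff]
  simp only [eval_sub, eval_mul, eval_C, hEp, hEn]
  rw [t1 pp, t1 nn]
  push_cast
  ring



lemma eval_Sp (a : ℕ) :
    Polynomial.eval (-1:ℝ) (Sp a) = (-1) ^ a * 2 ^ a * (a.factorial : ℝ) :=
  eval_S_neg_one a

/-- Orthogonality of `ff` against anything of degree `< nn`, with weight `(1-X)`. -/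
lemma orthoF (hnp : nn < pp) (h : ℝ[X]) (hh : h = 0 ∨ h.natDegree < nn) :
    ∫ x in (-1:ℝ)..1, Polynomial.eval x ((1 - X) * h * ff nn pp) = 0 := by
  have harr : (1 - X : ℝ[X]) * h * ff nn pp
      = ((1 - X) * h) * (C ((-1:ℝ) ^ (pp + 1) / (2 ^ pp * pp.factorial)) * Qp pp
          - C ((-1:ℝ) ^ (nn + 1) / (2 ^ nn * nn.factorial)) * Qp nn) := by
    rw [ff]
  rw [harr, integral_split]
  have hkp := key pp h (hh.imp (fun h0 => h0) (fun hd => lt_trans hd hnp))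
  have hkn := key nn h hh
  rw [hkp, hkn, eval_Sp pp, eval_Sp nn]
  have h2p : (2:ℝ) ^ pp ≠ 0 := by positivity
  have h2n : (2:ℝ) ^ nn ≠ 0 := by positivity
  have h3p := fact_ne pp
  have h3n := fact_ne nn
  have ep : (-1:ℝ) ^ (pp + 1) / (2 ^ pp * pp.factorial)
      * -(2 * Polynomial.eval (-1) h * ((-1) ^ pp * 2 ^ pp * pp.factorial))
      = 2 * Polynomial.eval (-1) h := by
    rcases Nat.even_or_odd pp with he | ho
    · rw [he.neg_one_pow, (he.add_one).neg_one_pow]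
      field_simp <;> ring
    · rw [ho.neg_one_pow, (ho.add_one).neg_one_pow]
      field_simp <;> ring
  have en : (-1:ℝ) ^ (nn + 1) / (2 ^ nn * nn.factorial)
      * -(2 * Polynomial.eval (-1) h * ((-1) ^ nn * 2 ^ nn * nn.factorial))
      = 2 * Polynomial.eval (-1) h := by
    rcases Nat.even_or_odd nn with he | ho
    · rw [he.neg_one_pow, (he.add_one).neg_one_pow]
      field_simp <;> ring
    · rw [ho.neg_one_pow, (ho.add_one).neg_one_pow]
      field_simp <;> ring
  rw [ep, en]
  ring

/-- Weighted L² norm of `ff`. -/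
lemma normF (hnp : nn < pp) :
    ∫ x in (-1:ℝ)..1, Polynomial.eval x ((1 - X) * ff nn pp * ff nn pp)
      = 2 * (((pp:ℝ) * (pp + 1) - nn * (nn + 1)) / 2) := by
  have harr : (1 - X : ℝ[X]) * ff nn pp * ff nn pp
      = ((1 - X) * ff nn pp) * (C ((-1:ℝ) ^ (pp + 1) / (2 ^ pp * pp.factorial)) * Qp pp
          - C ((-1:ℝ) ^ (nn + 1) / (2 ^ nn * nn.factorial)) * Qp nn) := by
    rw [ff]
  rw [harr, integral_split]
  have hqn : ∫ x in (-1:ℝ)..1, Polynomial.eval x ((1 - X) * ff nn pp * Qp nn) = 0 := by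
    have : (1 - X : ℝ[X]) * ff nn pp * Qp nn = (1 - X) * Qp nn * ff nn pp := by ring
    rw [this]
    exact orthoF nn pp hnp (Qp nn) (Qp_deg nn)
  have hqp := key pp (ff nn pp) (Or.inr (ff_deg nn pp hnp))
  rw [hqp, hqn, eval_Sp pp, ff_eval_neg_one]
  have h2p : (2:ℝ) ^ pp ≠ 0 := by positivity
  have h3p := fact_ne pp
  rcases Nat.even_or_odd pp with he | ho
  · rw [he.neg_one_pow, (he.add_one).neg_one_pow]
    field_simp <;> ring
  · rw [ho.neg_one_pow, (ho.add_one).neg_one_pow]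
    field_simp <;> ring

/-- Reduction of an integral over the reference triangle to iterated interval integrals. -/
lemma tri_integral (T : Set (Fin 2 → ℝ))
    (hT : T = {x : Fin 2 → ℝ | -1 ≤ x 0 ∧ -1 ≤ x 1 ∧ x 0 + x 1 ≤ 0})
    (F : ℝ → ℝ → ℝ) (hF : Continuous fun z : ℝ × ℝ => F z.1 z.2) :
    ∫ x in T, F (x 0) (x 1) = ∫ s in (-1:ℝ)..1, ∫ r in (-1:ℝ)..(-s), F r s := by
  classical
  set A : Set (ℝ × ℝ) := {z : ℝ × ℝ | -1 ≤ z.1 ∧ -1 ≤ z.2 ∧ z.1 + z.2 ≤ 0} with hA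
  have hAclosed : IsClosed A := by
    apply IsClosed.inter (isClosed_le continuous_const continuous_fst)
    exact IsClosed.inter (isClosed_le continuous_const continuous_snd)
      (isClosed_le (continuous_fst.add continuous_snd) continuous_const)
  have hAsub : A ⊆ Set.Icc ((-1:ℝ), (-1:ℝ)) (1, 1) := by
    rintro ⟨r, s⟩ ⟨h1, h2, h3⟩
    simp only [Set.mem_Icc, Prod.mk_le_mk] at *
    refine ⟨⟨h1, h2⟩, ⟨by linarith, by linarith⟩⟩
  have hAcompact : IsCompact A :=
    (isCompact_Icc).of_isClosed_subset hAclosed hAsub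
  have hAmeas : MeasurableSet A := hAclosed.measurableSet
  have hpre : T = MeasurableEquiv.finTwoArrow ⁻¹' A := by
    rw [hT]
    ext x
    simp [hA, MeasurableEquiv.finTwoArrow_apply]
  have h1 : (∫ x in T, F (x 0) (x 1)) = ∫ z in A, F z.1 z.2 := by
    rw [hpre]
    exact (volume_preserving_finTwoArrow ℝ).setIntegral_preimage_emb
      (MeasurableEquiv.measurableEmbedding _) (fun z => F z.1 z.2) A
  have hswap : Prod.swap ⁻¹' A = A := by
    ext ⟨s, r⟩
    simp only [hA, Set.mem_preimage, Set.mem_setOf_eq, Prod.swap_prod_mk]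
    constructor
    · rintro ⟨a, b, c⟩; exact ⟨b, a, by linarith⟩
    · rintro ⟨a, b, c⟩; exact ⟨b, a, by linarith⟩
  have hswapmp : MeasurePreserving (Prod.swap : ℝ × ℝ → ℝ × ℝ) volume volume := by
    rw [MeasureTheory.Measure.volume_eq_prod]
    exact Measure.measurePreserving_swap
  have h2 : (∫ z in A, F z.1 z.2) = ∫ z in A, F z.2 z.1 := by
    have := hswapmp.setIntegral_preimage_emb
      (MeasurableEquiv.prodComm : ℝ × ℝ ≃ᵐ ℝ × ℝ).measurableEmbedding
      (fun z : ℝ × ℝ => F z.1 z.2) A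
    rw [hswap] at this
    rw [← this]
    rfl
  have hG : Continuous fun z : ℝ × ℝ => F z.2 z.1 := hF.comp continuous_swap
  have hintOn : IntegrableOn (fun z : ℝ × ℝ => F z.2 z.1) A :=
    hG.continuousOn.integrableOn_compact hAcompact
  have hind : Integrable (A.indicator fun z : ℝ × ℝ => F z.2 z.1) volume :=
    (integrable_indicator_iff hAmeas).2 hintOn
  have h3 : (∫ z in A, F z.2 z.1)
      = ∫ s : ℝ, ∫ r : ℝ, A.indicator (fun z : ℝ × ℝ => F z.2 z.1) (s, r) := by
    rw [← integral_indicator hAmeas]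
    rw [show (volume : Measure (ℝ × ℝ)) = (volume : Measure ℝ).prod volume from
      MeasureTheory.Measure.volume_eq_prod ℝ ℝ] at hind ⊢
    exact integral_prod _ hind
  have hinner : ∀ s : ℝ,
      (∫ r : ℝ, A.indicator (fun z : ℝ × ℝ => F z.2 z.1) (s, r))
        = (Set.Icc (-1:ℝ) 1).indicator
            (fun s' => ∫ r in Set.Icc (-1:ℝ) (-s'), F r s') s := by
    intro s
    rcases em (s ∈ Set.Icc (-1:ℝ) 1) with hs | hs
    · rw [Set.indicator_of_mem hs]
      have hs' := (Set.mem_Icc.mp hs)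
      have hptwise : ∀ r : ℝ, A.indicator (fun z : ℝ × ℝ => F z.2 z.1) (s, r)
          = (Set.Icc (-1:ℝ) (-s)).indicator (fun r => F r s) r := by
        intro r
        rcases em (r ∈ Set.Icc (-1:ℝ) (-s)) with hr | hr
        · have hr' := Set.mem_Icc.mp hr
          rw [Set.indicator_of_mem hr]
          rw [Set.indicator_of_mem (show (s, r) ∈ A from ⟨hs'.1, hr'.1, by linarith⟩)]
        · rw [Set.indicator_of_notMem hr, Set.indicator_of_notMem]
          intro hmem
          obtain ⟨a, b, c⟩ := hmem
          exact hr (Set.mem_Icc.mpr ⟨b, by linarith⟩)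
      simp_rw [hptwise]
      exact integral_indicator measurableSet_Icc
    · rw [Set.indicator_of_notMem hs]
      have hptwise : ∀ r : ℝ, A.indicator (fun z : ℝ × ℝ => F z.2 z.1) (s, r) = 0 := by
        intro r
        rw [Set.indicator_of_notMem]
        intro hmem
        obtain ⟨a, b, c⟩ := hmem
        exact hs (Set.mem_Icc.mpr ⟨a, by linarith⟩)
      simp_rw [hptwise]
      exact integral_zero ℝ ℝ
  rw [h1, h2, h3]
  simp_rw [hinner]
  rw [integral_indicator measurableSet_Icc,
    MeasureTheory.integral_Icc_eq_integral_Ioc,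
    ← intervalIntegral.integral_of_le (show (-1:ℝ) ≤ 1 by norm_num)]
  refine intervalIntegral.integral_congr fun s hs => ?_
  rw [Set.uIcc_of_le (show (-1:ℝ) ≤ 1 by norm_num), Set.mem_Icc] at hs
  rw [MeasureTheory.integral_Icc_eq_integral_Ioc,
    ← intervalIntegral.integral_of_le (show (-1:ℝ) ≤ -s by linarith)]

end TraceSharp

open MeasureTheory MvPolynomial

namespace TraceSharp

noncomputable def toMv (f : Polynomial ℝ) : MvPolynomial (Fin 2) ℝ :=
  Polynomial.eval₂ MvPolynomial.C (MvPolynomial.X 1) f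

lemma eval_toMv (f : Polynomial ℝ) (x : Fin 2 → ℝ) :
    eval x (toMv f) = Polynomial.eval (x 1) f := by
  rw [toMv, Polynomial.hom_eval₂]
  have hc : (MvPolynomial.eval x).comp (MvPolynomial.C : ℝ →+* MvPolynomial (Fin 2) ℝ)
      = RingHom.id ℝ := by
    ext r
    simp
  rw [hc, eval_X]
  rfl

lemma totalDegree_toMv (f : Polynomial ℝ) : (toMv f).totalDegree ≤ f.natDegree := by
  rw [toMv, Polynomial.eval₂_eq_sum_range]
  refine le_trans (totalDegree_finset_sum _ _) ?_
  refine Finset.sup_le fun i hi => ?_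
  refine le_trans (totalDegree_mul _ _) ?_
  rw [totalDegree_C]
  rw [totalDegree_X_pow]
  simpa using Nat.lt_succ_iff.mp (Finset.mem_range.mp hi)

lemma support_deg_le (q : MvPolynomial (Fin 2) ℝ) (d : Fin 2 →₀ ℕ) (hd : d ∈ q.support) :
    d 0 + d 1 ≤ q.totalDegree := by
  have h := le_totalDegree hd
  have : (d.sum fun _ e => e) = d 0 + d 1 := by
    rw [Finsupp.sum_fintype]
    · exact Fin.sum_univ_two d
    · intro i; rfl
  omega

end TraceSharp

open TraceSharp in
/-- **Sharpness of the inverse trace inequality on the reference triangle**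
`T̂ = {(r,s) : -1 ≤ r, -1 ≤ s, r + s ≤ 0}`.  For integers `-1 ≤ n < p` there exists a
nonzero real polynomial `θ` in two variables of total degree at most `p`,
`L²(T̂)`-orthogonal to every polynomial of total degree at most `n` (vacuous when
`n = -1`), such that
`∫_{-1}^{1} θ(r,-1)² dr = ((p-n)(p+n+3)/2) ⬝ ∫_{T̂} θ²`. -/
theorem inverse_trace_inequality_reference_triangle_sharp
    (p n : ℤ) (hn : -1 ≤ n) (hnp : n < p)
    (Tref : Set (Fin 2 → ℝ))
    (hT : Tref = {x | -1 ≤ x 0 ∧ -1 ≤ x 1 ∧ x 0 + x 1 ≤ 0}) :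
    ∃ θ : MvPolynomial (Fin 2) ℝ, θ ≠ 0 ∧ (θ.totalDegree : ℤ) ≤ p ∧
      (∀ q : MvPolynomial (Fin 2) ℝ, (q.totalDegree : ℤ) ≤ n →
        ∫ x in Tref, eval x θ * eval x q = 0) ∧
      ∫ r in (-1 : ℝ)..1, (eval ![r, -1] θ) ^ 2 =
        (((p - n) * (p + n + 3) : ℤ) : ℝ) / 2 * ∫ x in Tref, (eval x θ) ^ 2 := by
  subst hT
  obtain ⟨nn, hnn⟩ : ∃ nn : ℕ, (nn : ℤ) = n + 1 :=
    ⟨(n + 1).toNat, Int.toNat_of_nonneg (by omega)⟩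
  obtain ⟨pp, hpp⟩ : ∃ pp : ℕ, (pp : ℤ) = p + 1 :=
    ⟨(p + 1).toNat, Int.toNat_of_nonneg (by omega)⟩
  have hnp' : nn < pp := by omega
  set S : Set (Fin 2 → ℝ) := {x | -1 ≤ x 0 ∧ -1 ≤ x 1 ∧ x 0 + x 1 ≤ 0} with hS
  set f : Polynomial ℝ := TraceSharp.ff nn pp with hf
  set θ : MvPolynomial (Fin 2) ℝ := TraceSharp.toMv f with hθ
  set Cr : ℝ := ((pp : ℝ) * ((pp : ℝ) + 1) - (nn : ℝ) * ((nn : ℝ) + 1)) / 2 with hCrdef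
  have hCr : Polynomial.eval (-1 : ℝ) f = Cr := TraceSharp.ff_eval_neg_one nn pp
  have hCrpos : 0 < Cr := by
    have h1 : (nn : ℝ) < (pp : ℝ) := by exact_mod_cast hnp'
    have h2 : (0 : ℝ) ≤ (nn : ℝ) := Nat.cast_nonneg nn
    rw [hCrdef]
    nlinarith
  have hevalθ : ∀ x : Fin 2 → ℝ, eval x θ = Polynomial.eval (x 1) f := fun x =>
    TraceSharp.eval_toMv f x
  have hvec : ∀ x : Fin 2 → ℝ, ![x 0, x 1] = x := by
    intro x
    funext i
    fin_cases i <;> rfl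
  refine ⟨θ, ?_, ?_, ?_, ?_⟩
  · -- θ ≠ 0
    intro h0
    have h1 := hevalθ (fun _ => (-1 : ℝ))
    rw [h0] at h1
    simp only [map_zero] at h1
    rw [hCr] at h1
    linarith
  · -- degree bound
    have h1 := TraceSharp.totalDegree_toMv f
    rw [← hθ] at h1
    have h2 : f.natDegree < pp := TraceSharp.ff_deg nn pp hnp'
    omega
  · -- orthogonality
    intro q hq
    have hq0 : (0 : ℤ) ≤ (q.totalDegree : ℤ) := Int.ofNat_nonneg _
    have hqn : q.totalDegree + 1 ≤ nn := by omega
    -- continuity of the 2-variable integrand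
    have hcont2 : Continuous fun z : ℝ × ℝ => eval ![z.1, z.2] q := by
      have hv : Continuous fun z : ℝ × ℝ => (![z.1, z.2] : Fin 2 → ℝ) := by
        refine continuous_pi fun i => ?_
        fin_cases i
        · exact continuous_fst
        · exact continuous_snd
      have h5 : Continuous fun x : Fin 2 → ℝ => eval x q := MvPolynomial.continuous_eval q
      exact h5.comp hv
    have hF : Continuous fun z : ℝ × ℝ =>
        (fun r s => Polynomial.eval s f * eval ![r, s] q) z.1 z.2 :=
      ((f.continuous).comp continuous_snd).mul hcont2
    have htri := TraceSharp.tri_integral S hS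
      (fun r s => Polynomial.eval s f * eval ![r, s] q) hF
    have hlhs : (∫ x in S, eval x θ * eval x q)
        = ∫ x in S, (fun r s => Polynomial.eval s f * eval ![r, s] q) (x 0) (x 1) := by
      refine integral_congr_ae (Filter.Eventually.of_forall fun x => ?_)
      show eval x θ * eval x q = Polynomial.eval (x 1) f * eval ![x 0, x 1] q
      rw [hevalθ x, hvec x]
    rw [hlhs, htri]
    -- expand the polynomial q into monomials in the inner integral
    have hout : ∀ s : ℝ, (∫ r in (-1 : ℝ)..(-s), Polynomial.eval s f * eval ![r, s] q)
        = ∑ d ∈ q.support, coeff d q * Polynomial.eval s f * s ^ (d 1)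
            * (((-s) ^ (d 0 + 1) - (-1 : ℝ) ^ (d 0 + 1)) / ((d 0 : ℝ) + 1)) := by
      intro s
      have hq' : (fun r : ℝ => Polynomial.eval s f * eval ![r, s] q)
          = fun r => ∑ d ∈ q.support,
              (coeff d q * Polynomial.eval s f * s ^ (d 1)) * r ^ (d 0) := by
        funext r
        rw [eval_eq', Finset.mul_sum]
        refine Finset.sum_congr rfl fun d hd => ?_
        rw [Fin.prod_univ_two]
        simp only [Matrix.cons_val_zero, Matrix.cons_val_one, Matrix.head_cons]
        ring
      rw [hq', intervalIntegral.integral_finset_sum]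
      · refine Finset.sum_congr rfl fun d hd => ?_
        rw [intervalIntegral.integral_const_mul, integral_pow]
      · intro d hd
        exact (continuous_const.mul (continuous_pow _)).intervalIntegrable _ _
    rw [intervalIntegral.integral_congr (g :=
      fun s => ∑ d ∈ q.support, coeff d q * Polynomial.eval s f * s ^ (d 1)
        * (((-s) ^ (d 0 + 1) - (-1 : ℝ) ^ (d 0 + 1)) / ((d 0 : ℝ) + 1)))
      (fun s _ => hout s)]
    rw [intervalIntegral.integral_finset_sum]
    · refine Finset.sum_eq_zero fun d hd => ?_
      have hab : d 0 + d 1 < nn := by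
        have := TraceSharp.support_deg_le q d hd
        omega
      set a := d 0 with ha
      set b := d 1 with hb
      set hp : Polynomial ℝ := Polynomial.C (-(-1 : ℝ) ^ (a + 1) / ((a : ℝ) + 1))
          * (Polynomial.X ^ b * ∑ i ∈ Finset.range (a + 1), Polynomial.X ^ i) with hhp
      have hdeg : hp.natDegree < nn := by
        have h1 : hp.natDegree ≤ (Polynomial.X ^ b *
            ∑ i ∈ Finset.range (a + 1), (Polynomial.X : Polynomial ℝ) ^ i).natDegree :=
          Polynomial.natDegree_C_mul_le _ _
        have h2 : (Polynomial.X ^ b *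
            ∑ i ∈ Finset.range (a + 1), (Polynomial.X : Polynomial ℝ) ^ i).natDegree
            ≤ b + a := by
          refine le_trans (Polynomial.natDegree_mul_le) ?_
          have h3 : ((∑ i ∈ Finset.range (a + 1), (Polynomial.X : Polynomial ℝ) ^ i)).natDegree
              ≤ a := by
            refine Polynomial.natDegree_sum_le_of_forall_le _ _ fun i hi => ?_
            rw [Polynomial.natDegree_X_pow]
            exact Nat.lt_succ_iff.mp (Finset.mem_range.mp hi)
          have h4 : ((Polynomial.X : Polynomial ℝ) ^ b).natDegree ≤ b := by
            rw [Polynomial.natDegree_X_pow]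
          omega
        omega
      have hpt : ∀ s : ℝ, coeff d q * Polynomial.eval s f * s ^ b
            * (((-s) ^ (a + 1) - (-1 : ℝ) ^ (a + 1)) / ((a : ℝ) + 1))
          = coeff d q
              * Polynomial.eval s ((1 - Polynomial.X) * hp * TraceSharp.ff nn pp) := by
        intro s
        have hg : (1 - s) * (∑ i ∈ Finset.range (a + 1), s ^ i) = 1 - s ^ (a + 1) := by
          have hgs := geom_sum_mul s (a + 1)
          linear_combination -hgs
        rw [neg_pow s (a + 1), ← hf]
        simp only [hhp, Polynomial.eval_mul, Polynomial.eval_sub, Polynomial.eval_one,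
          Polynomial.eval_X, Polynomial.eval_C, Polynomial.eval_pow,
          Polynomial.eval_finset_sum]
        linear_combination (coeff d q * ((-1 : ℝ) ^ (a + 1) / ((a : ℝ) + 1))
          * Polynomial.eval s f * s ^ b) * hg
      calc (∫ s in (-1 : ℝ)..1, coeff d q * Polynomial.eval s f * s ^ b
              * (((-s) ^ (a + 1) - (-1 : ℝ) ^ (a + 1)) / ((a : ℝ) + 1)))
          = ∫ s in (-1 : ℝ)..1, coeff d q
              * Polynomial.eval s ((1 - Polynomial.X) * hp * TraceSharp.ff nn pp) :=
            intervalIntegral.integral_congr fun s _ => hpt s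
        _ = coeff d q * ∫ s in (-1 : ℝ)..1,
              Polynomial.eval s ((1 - Polynomial.X) * hp * TraceSharp.ff nn pp) :=
            intervalIntegral.integral_const_mul _ _
        _ = 0 := by
            rw [TraceSharp.orthoF nn pp hnp' hp (Or.inr hdeg), mul_zero]
    · intro d hd
      apply Continuous.intervalIntegrable
      fun_prop
  · -- the sharp equality
    have hbd : ∀ r : ℝ, (eval ![r, (-1 : ℝ)] θ) ^ 2 = Cr ^ 2 := by
      intro r
      rw [hevalθ ![r, (-1 : ℝ)]]
      simp only [Matrix.cons_val_one, Matrix.head_cons, Matrix.cons_val_zero]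
      rw [hCr]
    have hF2 : Continuous fun z : ℝ × ℝ =>
        (fun r s => (Polynomial.eval s f) ^ 2) z.1 z.2 := by
      fun_prop
    have htri := TraceSharp.tri_integral S hS (fun r s => (Polynomial.eval s f) ^ 2) hF2
    have hlhs2 : (∫ x in S, (eval x θ) ^ 2)
        = ∫ x in S, (fun r s => (Polynomial.eval s f) ^ 2) (x 0) (x 1) := by
      refine integral_congr_ae (Filter.Eventually.of_forall fun x => ?_)
      show (eval x θ) ^ 2 = (Polynomial.eval (x 1) f) ^ 2
      rw [hevalθ x]
    have hin : ∀ s : ℝ, (∫ r in (-1 : ℝ)..(-s), (Polynomial.eval s f) ^ 2)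
        = Polynomial.eval s ((1 - Polynomial.X) * TraceSharp.ff nn pp * TraceSharp.ff nn pp) := by
      intro s
      rw [intervalIntegral.integral_const]
      simp only [Polynomial.eval_mul, Polynomial.eval_sub, Polynomial.eval_one,
        Polynomial.eval_X, smul_eq_mul, ← hf]
      ring
    have hnorm : (∫ x in S, (eval x θ) ^ 2) = 2 * Cr := by
      rw [hlhs2, htri,
        intervalIntegral.integral_congr (g := fun s =>
          Polynomial.eval s ((1 - Polynomial.X) * TraceSharp.ff nn pp * TraceSharp.ff nn pp))
          (fun s _ => hin s)]
      exact TraceSharp.normF nn pp hnp'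
    rw [hnorm,
      intervalIntegral.integral_congr (g := fun _ => Cr ^ 2) (fun r _ => hbd r),
      intervalIntegral.integral_const]
    have hpr : (p : ℝ) = (pp : ℝ) - 1 := by
      have := congrArg (fun z : ℤ => (z : ℝ)) hpp
      push_cast at this
      linarith
    have hnr : (n : ℝ) = (nn : ℝ) - 1 := by
      have := congrArg (fun z : ℤ => (z : ℝ)) hnn
      push_cast at this
      linarith
    have hcast : (((p - n) * (p + n + 3) : ℤ) : ℝ) = 2 * Cr := by
      push_cast
      rw [hpr, hnr, hCrdef]
      ring
    rw [hcast]
    rw [smul_eq_mul]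
    ring
end

section
/- Let p, n be integers with −1 ≤ n < p and let S = {(i, j) ∈ ℕ² : n+1 ≤ i+j ≤ p}. Define the real symmetric matrix L indexed by S × S with entries L_{(i,j),(k,l)} = δ_{ik} · (−1)^{j+l} · √(i+j+1) · √(k+l+1), where δ_{ik} is the Kronecker delta. Then L is positive semidefinite and its largest eigenvalue (equivalently, its spectral radius) equals (p−n)(p+n+3)/2. -/
private lemma gauss_real (N : ℕ) : ∀ P : ℕ, N ≤ P + 1 →
    ∑ m ∈ Finset.Icc N P, ((m : ℝ) + 1) = ((P : ℝ) + N + 2) * ((P : ℝ) + 1 - N) / 2 := by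
  intro P
  induction P with
  | zero =>
      intro h
      interval_cases N <;> simp
  | succ P ih =>
      intro h
      rcases Nat.lt_or_ge N (P + 2) with h' | h'
      · have hN : N ≤ P + 1 := by omega
        rw [Finset.sum_Icc_succ_top hN, ih hN]
        push_cast
        ring
      · have he : Finset.Icc N (P + 1) = ∅ := by
          rw [Finset.Icc_eq_empty_iff]; omega
        have hN : N = P + 2 := by omega
        subst hN
        rw [he]
        push_cast
        ring

/-- **The triangle face mass matrix.**  For integers `-1 ≤ n < p`, the real symmetric
matrix `L` indexed by `S = {(i,j) ∈ ℕ² : n+1 ≤ i+j ≤ p}` with entries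
`L (i,j) (k,l) = δ_{ik} (-1)^(j+l) √(i+j+1) √(k+l+1)`
(obtained by restricting the Proriol–Koornwinder–Dubiner orthonormal basis of `ℙ_p` on
the reference triangle to the edge `s = -1` and discarding all modes of total degree at
most `n`) is positive semidefinite and its largest eigenvalue (equivalently, its
spectral radius) equals `(p-n)(p+n+3)/2`. -/
theorem triangle_face_mass_matrix_spectrum
    (p n : ℤ) (hn : -1 ≤ n) (hnp : n < p)
    (S : Set (ℕ × ℕ))
    (hS : S = {x | n + 1 ≤ ((x.1 + x.2 : ℕ) : ℤ) ∧ ((x.1 + x.2 : ℕ) : ℤ) ≤ p})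
    [Fintype S]
    (L : Matrix S S ℝ)
    (hL : ∀ a b : S,
      L a b = (if (a : ℕ × ℕ).1 = (b : ℕ × ℕ).1 then (1 : ℝ) else 0) *
        (-1 : ℝ) ^ ((a : ℕ × ℕ).2 + (b : ℕ × ℕ).2) *
        Real.sqrt (((a : ℕ × ℕ).1 : ℝ) + ((a : ℕ × ℕ).2 : ℝ) + 1) *
        Real.sqrt (((b : ℕ × ℕ).1 : ℝ) + ((b : ℕ × ℕ).2 : ℝ) + 1)) :
    L.PosSemidef ∧
      (((p - n) * (p + n + 3) : ℤ) : ℝ) / 2 ∈ spectrum ℝ L ∧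
      ∀ μ ∈ spectrum ℝ L, μ ≤ (((p - n) * (p + n + 3) : ℤ) : ℝ) / 2 := by
  classical
  set f : S → ℕ := fun a => (a : ℕ × ℕ).1 with hf
  set d : S → ℕ := fun a => (a : ℕ × ℕ).1 + (a : ℕ × ℕ).2 with hd
  set u : S → ℝ := fun a => (-1 : ℝ) ^ (a : ℕ × ℕ).2 *
      Real.sqrt (((a : ℕ × ℕ).1 : ℝ) + ((a : ℕ × ℕ).2 : ℝ) + 1) with hu
  have hmem : ∀ a : S, n + 1 ≤ (d a : ℤ) ∧ (d a : ℤ) ≤ p := by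
    intro a
    have h2 : (a : ℕ × ℕ) ∈
        {x : ℕ × ℕ | n + 1 ≤ ((x.1 + x.2 : ℕ) : ℤ) ∧ ((x.1 + x.2 : ℕ) : ℤ) ≤ p} := by
      rw [← hS]; exact a.2
    exact_mod_cast h2
  have hmemS : ∀ x : ℕ × ℕ,
      (n + 1 ≤ ((x.1 + x.2 : ℕ) : ℤ) ∧ ((x.1 + x.2 : ℕ) : ℤ) ≤ p) → x ∈ S := by
    intro x hx; rw [hS]; exact hx
  have hL' : ∀ a b : S, L a b = (if f a = f b then (1 : ℝ) else 0) * (u a * u b) := by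
    intro a b
    rw [hL a b, pow_add]
    simp only [hu, hf]
    ring
  have hu2 : ∀ a : S, u a ^ 2 = (d a : ℝ) + 1 := by
    intro a
    have h0 : (0 : ℝ) ≤ ((a : ℕ × ℕ).1 : ℝ) + ((a : ℕ × ℕ).2 : ℝ) + 1 := by positivity
    simp only [hu, hd]
    rw [mul_pow, ← pow_mul, mul_comm ((a : ℕ × ℕ).2) 2, pow_mul, Real.sq_sqrt h0]
    push_cast
    ring
  set fib : ℕ → Finset S := fun i => Finset.univ.filter (fun a => f a = i) with hfib
  set T : Finset ℕ := Finset.univ.image f with hT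
  have hQF : ∀ x : S → ℝ, dotProduct x (L.mulVec x)
      = ∑ i ∈ T, (∑ a ∈ fib i, u a * x a) ^ 2 := by
    intro x
    have step1 : dotProduct x (L.mulVec x)
        = ∑ a : S, (u a * x a) * ∑ b ∈ fib (f a), (u b * x b) := by
      simp only [dotProduct, Matrix.mulVec]
      refine Finset.sum_congr rfl fun a _ => ?_
      rw [Finset.sum_filter, Finset.mul_sum, Finset.mul_sum]
      refine Finset.sum_congr rfl fun b _ => ?_
      rw [hL' a b]
      by_cases h : f a = f b
      · rw [if_pos h, if_pos h.symm]; ring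
      · rw [if_neg h, if_neg (fun hh => h hh.symm)]; ring
    rw [step1,
      ← Finset.sum_fiberwise_of_maps_to (g := f) (t := T)
        (fun a _ => Finset.mem_image_of_mem f (Finset.mem_univ a))
        (fun a => (u a * x a) * ∑ b ∈ fib (f a), (u b * x b))]
    refine Finset.sum_congr rfl fun i _ => ?_
    have hcong : ∀ a ∈ fib i, (u a * x a) * (∑ b ∈ fib (f a), (u b * x b))
        = (u a * x a) * ∑ b ∈ fib i, (u b * x b) := by
      intro a ha
      rw [(Finset.mem_filter.1 ha).2]
    rw [Finset.sum_congr rfl hcong, ← Finset.sum_mul, sq]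
  -- Hermitian
  have hherm : L.IsHermitian := by
    refine Matrix.IsHermitian.ext fun a b => ?_
    rw [star_trivial, hL' a b, hL' b a]
    by_cases h : f a = f b
    · rw [if_pos h, if_pos h.symm]; ring
    · rw [if_neg h, if_neg (fun hh => h hh.symm)]; ring
  have hPSD : L.PosSemidef := by
    refine Matrix.PosSemidef.of_dotProduct_mulVec_nonneg hherm fun x => ?_
    rw [star_trivial, hQF x]
    exact Finset.sum_nonneg fun i _ => sq_nonneg _
  -- arithmetic setup
  set N : ℕ := (n + 1).toNat with hNdef
  set P : ℕ := p.toNat with hPdef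
  have hp0 : (0 : ℤ) ≤ p := by omega
  have hNcast : (N : ℤ) = n + 1 := Int.toNat_of_nonneg (by omega)
  have hPcast : (P : ℤ) = p := Int.toNat_of_nonneg hp0
  have hNP : N ≤ P := by omega
  set lam : ℝ := (((p - n) * (p + n + 3) : ℤ) : ℝ) / 2 with hlamdef
  have himg_sub : ∀ i, (fib i).image d ⊆ Finset.Icc N P := by
    intro i m hm
    obtain ⟨a, _, rfl⟩ := Finset.mem_image.1 hm
    have h1 := hmem a
    rw [Finset.mem_Icc]
    omega
  have himg0 : (fib 0).image d = Finset.Icc N P := by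
    refine Finset.Subset.antisymm (himg_sub 0) (fun m hm => ?_)
    rw [Finset.mem_Icc] at hm
    have hmS : ((0, m) : ℕ × ℕ) ∈ S := by
      refine hmemS _ ?_
      constructor <;> push_cast <;> omega
    refine Finset.mem_image.2 ⟨⟨(0, m), hmS⟩, ?_, ?_⟩
    · simp [hfib, hf]
    · simp [hd]
  have hd_inj : ∀ i, ∀ a ∈ fib i, ∀ b ∈ fib i, d a = d b → a = b := by
    intro i a ha b hb hab
    have ha' := (Finset.mem_filter.1 ha).2
    have hb' := (Finset.mem_filter.1 hb).2
    simp only [hf] at ha' hb'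
    simp only [hd] at hab
    apply Subtype.ext
    apply Prod.ext <;> omega
  have hfibsum : ∀ i, ∑ a ∈ fib i, (u a) ^ 2 = ∑ m ∈ (fib i).image d, ((m : ℝ) + 1) := by
    intro i
    rw [Finset.sum_image (hd_inj i)]
    exact Finset.sum_congr rfl fun a _ => hu2 a
  have hNreal : (N : ℝ) = (n : ℝ) + 1 := by exact_mod_cast congrArg (Int.cast : ℤ → ℝ) hNcast
  have hPreal : (P : ℝ) = (p : ℝ) := by exact_mod_cast congrArg (Int.cast : ℤ → ℝ) hPcast
  have hlam0 : ∑ a ∈ fib 0, (u a) ^ 2 = lam := by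
    rw [hfibsum 0, himg0, gauss_real N P (by omega), hlamdef, hNreal, hPreal]
    push_cast
    ring
  have hfible : ∀ i, ∑ a ∈ fib i, (u a) ^ 2 ≤ lam := by
    intro i
    rw [← hlam0, hfibsum i, hfibsum 0, himg0]
    refine Finset.sum_le_sum_of_subset_of_nonneg (himg_sub i) (fun m _ _ => by positivity)
  -- the eigenvector
  set x : S → ℝ := fun a => if f a = 0 then u a else 0 with hx
  have hmemS0 : ((0, N) : ℕ × ℕ) ∈ S := by
    refine hmemS _ ?_
    constructor <;> push_cast <;> omega
  have hune : ∀ a : S, u a ≠ 0 := by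
    intro a
    simp only [hu]
    apply mul_ne_zero
    · exact pow_ne_zero _ (by norm_num)
    · have hpos : (0 : ℝ) < ((a : ℕ × ℕ).1 : ℝ) + ((a : ℕ × ℕ).2 : ℝ) + 1 := by positivity
      exact ne_of_gt (Real.sqrt_pos.2 hpos)
  have hx0 : x ≠ 0 := by
    intro h
    have h1 := congrFun h ⟨(0, N), hmemS0⟩
    have hf0 : f ⟨(0, N), hmemS0⟩ = 0 := rfl
    rw [hx] at h1
    simp only [hf0, if_pos rfl, Pi.zero_apply] at h1
    exact hune _ h1
  have heig : L.mulVec x = lam • x := by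
    funext a
    simp only [Matrix.mulVec, dotProduct, Pi.smul_apply, smul_eq_mul]
    by_cases ha : f a = 0
    · have hterm : ∀ b : S, L a b * x b = if f b = 0 then u a * u b ^ 2 else 0 := by
        intro b
        rw [hL' a b]
        simp only [hx]
        by_cases hb : f b = 0
        · rw [if_pos hb, if_pos hb, if_pos (ha.trans hb.symm)]; ring
        · rw [if_neg hb, if_neg hb]; ring
      rw [Finset.sum_congr rfl (fun b _ => hterm b), ← Finset.sum_filter, ← Finset.mul_sum]
      have : (Finset.univ.filter fun b => f b = 0) = fib 0 := rfl
      rw [this, hlam0]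
      simp only [hx]
      rw [if_pos ha]
      ring
    · have hterm : ∀ b : S, L a b * x b = 0 := by
        intro b
        rw [hL' a b]
        simp only [hx]
        by_cases hb : f b = 0
        · rw [if_neg (fun h => ha (h.trans hb))]; ring
        · rw [if_neg hb, mul_zero]
      rw [Finset.sum_congr rfl (fun b _ => hterm b), Finset.sum_const_zero]
      simp only [hx]
      rw [if_neg ha, mul_zero]
  have hspec_iff : ∀ μ : ℝ, μ ∈ spectrum ℝ L ↔
      ((algebraMap ℝ (Matrix S S ℝ)) μ - L).det = 0 := by
    intro μ
    rw [spectrum.mem_iff, Matrix.isUnit_iff_isUnit_det, isUnit_iff_ne_zero, not_ne_iff]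
  have hsubvec : ∀ (μ : ℝ) (v : S → ℝ),
      ((algebraMap ℝ (Matrix S S ℝ)) μ - L).mulVec v = μ • v - L.mulVec v := by
    intro μ v
    rw [Matrix.sub_mulVec, Algebra.algebraMap_eq_smul_one, Matrix.smul_mulVec,
      Matrix.one_mulVec]
  refine ⟨hPSD, ?_, ?_⟩
  · rw [hspec_iff lam, ← Matrix.exists_mulVec_eq_zero_iff]
    exact ⟨x, hx0, by rw [hsubvec, heig, sub_self]⟩
  · intro μ hμ
    rw [hspec_iff μ, ← Matrix.exists_mulVec_eq_zero_iff] at hμ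
    obtain ⟨v, hv0, hv⟩ := hμ
    rw [hsubvec, sub_eq_zero] at hv
    have hLv : L.mulVec v = μ • v := hv.symm
    have hsum : dotProduct v (L.mulVec v) = μ * ∑ a, v a ^ 2 := by
      rw [hLv]
      simp only [dotProduct, Pi.smul_apply, smul_eq_mul, Finset.mul_sum]
      exact Finset.sum_congr rfl fun a _ => by ring
    have hbound : dotProduct v (L.mulVec v) ≤ lam * ∑ a, v a ^ 2 := by
      rw [hQF v]
      calc ∑ i ∈ T, (∑ a ∈ fib i, u a * v a) ^ 2
          ≤ ∑ i ∈ T, lam * ∑ a ∈ fib i, v a ^ 2 := by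
            refine Finset.sum_le_sum fun i _ => ?_
            calc (∑ a ∈ fib i, u a * v a) ^ 2
                ≤ (∑ a ∈ fib i, u a ^ 2) * (∑ a ∈ fib i, v a ^ 2) :=
                  Finset.sum_mul_sq_le_sq_mul_sq _ _ _
              _ ≤ lam * ∑ a ∈ fib i, v a ^ 2 :=
                  mul_le_mul_of_nonneg_right (hfible i)
                    (Finset.sum_nonneg fun a _ => sq_nonneg _)
        _ = lam * ∑ a, v a ^ 2 := by
            rw [← Finset.mul_sum]
            congr 1
            exact Finset.sum_fiberwise_of_maps_to
              (fun a _ => Finset.mem_image_of_mem f (Finset.mem_univ a)) _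
    have hpos : 0 < ∑ a, v a ^ 2 := by
      obtain ⟨a, hva⟩ := Function.ne_iff.1 hv0
      exact Finset.sum_pos' (fun b _ => sq_nonneg _)
        ⟨a, Finset.mem_univ a, lt_of_le_of_ne (sq_nonneg _) (Ne.symm (pow_ne_zero 2 hva))⟩
    rw [hsum] at hbound
    exact le_of_mul_le_mul_right hbound hpos
end

section
/- Let p, n be integers with −1 ≤ n < p and let S = {(i, j, k) ∈ ℕ³ : n+1 ≤ i+j+k ≤ p}. Define the real symmetric matrix L indexed by S × S with entries L_{(i,j,k),(l,m,q)} = δ_{il} · δ_{jm} · (−1)^{k+q} · √((2(i+j+k)+3)/2) · √((2(l+m+q)+3)/2), where δ denotes the Kronecker delta. Then L is positive semidefinite and its largest eigenvalue (equivalently, its spectral radius) equals (p−n)(p+n+4)/2. -/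
open Finset Matrix

private lemma aux_quad {ι κ : Type*} [Fintype ι] [DecidableEq κ] (g : ι → κ) (y : ι → ℝ) :
    ∑ a, ∑ b, (if g a = g b then (1:ℝ) else 0) * (y a * y b)
      = ∑ c ∈ Finset.univ.image g,
          (∑ a ∈ Finset.univ.filter (fun a => g a = c), y a) ^ 2 := by
  classical
  set T : κ → ℝ := fun c => ∑ a ∈ Finset.univ.filter (fun a => g a = c), y a with hT
  have h1 : ∀ a : ι, ∑ b, (if g a = g b then (1:ℝ) else 0) * (y a * y b)
      = y a * T (g a) := by
    intro a
    rw [hT, Finset.mul_sum, Finset.sum_filter]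
    refine Finset.sum_congr rfl fun b _ => ?_
    by_cases h : g a = g b
    · simp [h]
    · rw [if_neg (fun hb : g b = g a => h hb.symm)]; simp [h]
  calc ∑ a, ∑ b, (if g a = g b then (1:ℝ) else 0) * (y a * y b)
      = ∑ a, y a * T (g a) := Finset.sum_congr rfl fun a _ => h1 a
    _ = ∑ c ∈ Finset.univ.image g,
          ∑ a ∈ Finset.univ.filter (fun a => g a = c), y a * T (g a) :=
        (Finset.sum_fiberwise_of_maps_to
          (fun a _ => Finset.mem_image_of_mem g (Finset.mem_univ a)) _).symm
    _ = _ := by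
        refine Finset.sum_congr rfl fun c _ => ?_
        have : ∑ a ∈ Finset.univ.filter (fun a => g a = c), y a * T (g a)
            = ∑ a ∈ Finset.univ.filter (fun a => g a = c), y a * T c := by
          refine Finset.sum_congr rfl fun a ha => ?_
          rw [(Finset.mem_filter.1 ha).2]
        rw [this, ← Finset.sum_mul, sq]

private lemma aux_gauss (c : ℝ) (M : ℕ) :
    ∑ t ∈ Finset.range M, (c + (t:ℝ)) = M * c + M * (M - 1) / 2 := by
  induction M with
  | zero => simp
  | succ m ih =>
    rw [Finset.sum_range_succ, ih]
    push_cast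
    ring

private def auxg (x : ℕ × ℕ × ℕ) : ℕ × ℕ := (x.1, x.2.1)

private def auxt (x : ℕ × ℕ × ℕ) : ℕ := x.1 + x.2.1 + x.2.2

private noncomputable def auxf (x : ℕ × ℕ × ℕ) : ℝ :=
  (-1) ^ x.2.2 * Real.sqrt ((2 * (auxt x : ℝ) + 3) / 2)

private lemma auxf_sq (x : ℕ × ℕ × ℕ) : auxf x ^ 2 = (2 * (auxt x : ℝ) + 3) / 2 := by
  have h1 : ((-1 : ℝ) ^ x.2.2) ^ 2 = 1 := by
    rw [← pow_mul, mul_comm, pow_mul]; norm_num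
  have h2 : (0:ℝ) ≤ (2 * (auxt x : ℝ) + 3) / 2 := by positivity
  rw [auxf, mul_pow, h1, one_mul, Real.sq_sqrt h2]

/-- **The tetrahedron face mass matrix.**  For integers `-1 ≤ n < p`, the real symmetric
matrix `L` indexed by `S = {(i,j,k) ∈ ℕ³ : n+1 ≤ i+j+k ≤ p}` with entries
`L (i,j,k) (l,m,q) = δ_{il} δ_{jm} (-1)^(k+q) √((2(i+j+k)+3)/2) √((2(l+m+q)+3)/2)`
(obtained by restricting the Dubiner orthonormal basis of `ℙ_p` on the reference
tetrahedron to the face `t = -1` and discarding all modes of total degree at most `n`)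
is positive semidefinite and its largest eigenvalue (equivalently, its spectral radius)
equals `(p-n)(p+n+4)/2`. -/
theorem tetrahedron_face_mass_matrix_spectrum
    (p n : ℤ) (hn : -1 ≤ n) (hnp : n < p)
    (S : Set (ℕ × ℕ × ℕ))
    (hS : S = {x | n + 1 ≤ ((x.1 + x.2.1 + x.2.2 : ℕ) : ℤ) ∧
      ((x.1 + x.2.1 + x.2.2 : ℕ) : ℤ) ≤ p})
    [Fintype S]
    (L : Matrix S S ℝ)
    (hL : ∀ a b : S,
      L a b = (if (a : ℕ × ℕ × ℕ).1 = (b : ℕ × ℕ × ℕ).1 then (1 : ℝ) else 0) *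
        (if (a : ℕ × ℕ × ℕ).2.1 = (b : ℕ × ℕ × ℕ).2.1 then (1 : ℝ) else 0) *
        (-1 : ℝ) ^ ((a : ℕ × ℕ × ℕ).2.2 + (b : ℕ × ℕ × ℕ).2.2) *
        Real.sqrt ((2 * (((a : ℕ × ℕ × ℕ).1 : ℝ) + ((a : ℕ × ℕ × ℕ).2.1 : ℝ) +
          ((a : ℕ × ℕ × ℕ).2.2 : ℝ)) + 3) / 2) *
        Real.sqrt ((2 * (((b : ℕ × ℕ × ℕ).1 : ℝ) + ((b : ℕ × ℕ × ℕ).2.1 : ℝ) +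
          ((b : ℕ × ℕ × ℕ).2.2 : ℝ)) + 3) / 2)) :
    L.PosSemidef ∧
      (((p - n) * (p + n + 4) : ℤ) : ℝ) / 2 ∈ spectrum ℝ L ∧
      ∀ μ ∈ spectrum ℝ L, μ ≤ (((p - n) * (p + n + 4) : ℤ) : ℝ) / 2 := by
  classical
  -- membership criterion
  have hmem : ∀ x : ℕ × ℕ × ℕ, x ∈ S ↔ (n + 1 ≤ (auxt x : ℤ) ∧ (auxt x : ℤ) ≤ p) := by
    intro x
    rw [hS]
    simp only [Set.mem_setOf_eq, auxt]
  set g : S → ℕ × ℕ := fun a => auxg (a : ℕ × ℕ × ℕ) with hg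
  set f : S → ℝ := fun a => auxf (a : ℕ × ℕ × ℕ) with hf
  -- factorized form of L
  have hLf : ∀ a b : S, L a b = (if g a = g b then (1:ℝ) else 0) * (f a * f b) := by
    intro a b
    rw [hL a b]
    by_cases h1 : (a : ℕ × ℕ × ℕ).1 = (b : ℕ × ℕ × ℕ).1
    · by_cases h2 : (a : ℕ × ℕ × ℕ).2.1 = (b : ℕ × ℕ × ℕ).2.1
      · have hgab : g a = g b := by simp [hg, auxg, h1, h2]
        rw [if_pos h1, if_pos h2, if_pos hgab]
        simp only [hf, auxf, auxt]
        push_cast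
        rw [pow_add]
        ring
      · have hgab : g a ≠ g b := by simp [hg, auxg, Prod.ext_iff, h2]
        rw [if_neg h2, if_neg hgab]; ring
    · have hgab : g a ≠ g b := by simp [hg, auxg, Prod.ext_iff, h1]
      rw [if_neg h1, if_neg hgab]; ring
  have hf2 : ∀ a : S, f a ^ 2 = (2 * (auxt (a : ℕ × ℕ × ℕ) : ℝ) + 3) / 2 := fun a =>
    auxf_sq _
  -- basic integer data
  set N : ℕ := (n + 1).toNat with hN
  set P : ℕ := p.toNat with hP
  have hNZ : (N : ℤ) = n + 1 := Int.toNat_of_nonneg (by omega)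
  have hPZ : (P : ℤ) = p := Int.toNat_of_nonneg (by omega)
  have hNP : N ≤ P := by omega
  have ha0mem : ((0, 0, N) : ℕ × ℕ × ℕ) ∈ S := by
    rw [hmem]
    have : auxt (0, 0, N) = N := by simp [auxt]
    rw [this]
    omega
  set a0 : S := ⟨(0, 0, N), ha0mem⟩ with ha0
  -- the top eigenvalue
  set lam : ℝ := ∑ b ∈ Finset.univ.filter (fun b : S => g b = (0, 0)), f b ^ 2 with hlamdef
  have hlam : lam = (((p - n) * (p + n + 4) : ℤ) : ℝ) / 2 := by
    have h1 : lam = ∑ k ∈ Finset.Icc N P, ((2 * (k : ℝ) + 3) / 2) := by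
      rw [hlamdef]
      refine Finset.sum_bij' (i := fun (a : S) _ => (a : ℕ × ℕ × ℕ).2.2)
        (j := fun (k : ℕ) hk => (⟨(0, 0, k), ?_⟩ : S)) ?_ ?_ ?_ ?_ ?_
      · rw [hmem]
        have : auxt (0, 0, k) = k := by simp [auxt]
        rw [this]
        rw [Finset.mem_Icc] at hk
        omega
      · intro a ha
        rw [Finset.mem_filter] at ha
        have hga : (a : ℕ × ℕ × ℕ).1 = 0 ∧ (a : ℕ × ℕ × ℕ).2.1 = 0 := by
          have := ha.2
          simp [hg, auxg, Prod.ext_iff] at this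
          exact this
        have hmema := (hmem _).1 a.2
        have hta : auxt (a : ℕ × ℕ × ℕ) = (a : ℕ × ℕ × ℕ).2.2 := by
          simp [auxt, hga.1, hga.2]
        rw [hta] at hmema
        rw [Finset.mem_Icc]
        show N ≤ (a : ℕ × ℕ × ℕ).2.2 ∧ (a : ℕ × ℕ × ℕ).2.2 ≤ P
        omega
      · intro k hk
        simp [Finset.mem_filter, hg, auxg]
      · intro a ha
        rw [Finset.mem_filter] at ha
        have hga : (a : ℕ × ℕ × ℕ).1 = 0 ∧ (a : ℕ × ℕ × ℕ).2.1 = 0 := by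
          have := ha.2
          simp [hg, auxg, Prod.ext_iff] at this
          exact this
        ext
        · simp [hga.1]
        · simp [hga.2]
        · simp
      · intro k hk; rfl
      · intro a ha
        rw [Finset.mem_filter] at ha
        have hga : (a : ℕ × ℕ × ℕ).1 = 0 ∧ (a : ℕ × ℕ × ℕ).2.1 = 0 := by
          have := ha.2
          simp [hg, auxg, Prod.ext_iff] at this
          exact this
        rw [hf2 a]
        have : auxt (a : ℕ × ℕ × ℕ) = (a : ℕ × ℕ × ℕ).2.2 := by
          simp [auxt, hga.1, hga.2]
        rw [this]
    rw [h1, ← Finset.Ico_add_one_right_eq_Icc, Finset.sum_Ico_eq_sum_range]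
    set M : ℕ := P + 1 - N with hM
    have h2 : ∀ t : ℕ, (2 * ((N + t : ℕ) : ℝ) + 3) / 2 = ((N : ℝ) + 3 / 2) + (t : ℝ) := by
      intro t; push_cast; ring
    rw [Finset.sum_congr rfl fun t _ => h2 t, aux_gauss]
    have hMr : (M : ℝ) = (p : ℝ) - (n : ℝ) := by
      have : (M : ℤ) = p - n := by omega
      exact_mod_cast this
    have hNr : (N : ℝ) = (n : ℝ) + 1 := by exact_mod_cast hNZ
    push_cast
    rw [hMr, hNr]
    ring
  -- every fiber sum is at most lam
  have hfib : ∀ c : ℕ × ℕ,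
      ∑ a ∈ Finset.univ.filter (fun a : S => g a = c), f a ^ 2 ≤ lam := by
    intro c
    have hmemm : ∀ a : S, ((0, 0, auxt (a : ℕ × ℕ × ℕ)) : ℕ × ℕ × ℕ) ∈ S := by
      intro a
      rw [hmem]
      have h1 : auxt ((0, 0, auxt (a : ℕ × ℕ × ℕ)) : ℕ × ℕ × ℕ) = auxt (a : ℕ × ℕ × ℕ) := by
        simp [auxt]
      rw [h1]
      exact (hmem _).1 a.2
    set m : S → S := fun a => ⟨(0, 0, auxt (a : ℕ × ℕ × ℕ)), hmemm a⟩ with hm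
    have step1 : ∑ a ∈ Finset.univ.filter (fun a : S => g a = c), f a ^ 2
        = ∑ a ∈ Finset.univ.filter (fun a : S => g a = c), f (m a) ^ 2 := by
      refine Finset.sum_congr rfl fun a _ => ?_
      rw [hf2, hf2]
      have : auxt ((m a : S) : ℕ × ℕ × ℕ) = auxt (a : ℕ × ℕ × ℕ) := by
        simp [hm, auxt]
      rw [this]
    have hinj : ∀ a ∈ Finset.univ.filter (fun a : S => g a = c),
        ∀ a' ∈ Finset.univ.filter (fun a : S => g a = c), m a = m a' → a = a' := by
      intro a ha a' ha' hmaa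
      rw [Finset.mem_filter] at ha ha'
      have h1 : auxt (a : ℕ × ℕ × ℕ) = auxt (a' : ℕ × ℕ × ℕ) := by
        have := congrArg (fun b : S => ((b : ℕ × ℕ × ℕ)).2.2) hmaa
        simpa [hm] using this
      have h2 : (a : ℕ × ℕ × ℕ).1 = (a' : ℕ × ℕ × ℕ).1 ∧
          (a : ℕ × ℕ × ℕ).2.1 = (a' : ℕ × ℕ × ℕ).2.1 := by
        have := ha.2.trans ha'.2.symm
        simp [hg, auxg, Prod.ext_iff] at this
        exact this
      have h3 : (a : ℕ × ℕ × ℕ).2.2 = (a' : ℕ × ℕ × ℕ).2.2 := by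
        simp only [auxt] at h1
        omega
      ext
      · exact h2.1
      · exact h2.2
      · exact h3
    have step2 : ∑ a ∈ Finset.univ.filter (fun a : S => g a = c), f (m a) ^ 2
        = ∑ b ∈ (Finset.univ.filter (fun a : S => g a = c)).image m, f b ^ 2 := by
      rw [Finset.sum_image hinj]
    have hsub : (Finset.univ.filter (fun a : S => g a = c)).image m
        ⊆ Finset.univ.filter (fun b : S => g b = (0, 0)) := by
      intro b hb
      rw [Finset.mem_image] at hb
      obtain ⟨a, _, rfl⟩ := hb
      simp [Finset.mem_filter, hg, hm, auxg]
    rw [step1, step2, hlamdef]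
    exact Finset.sum_le_sum_of_subset_of_nonneg hsub fun i _ _ => sq_nonneg _
  -- the quadratic form
  have hquad : ∀ x : S → ℝ, star x ⬝ᵥ (L *ᵥ x)
      = ∑ c ∈ Finset.univ.image g,
          (∑ a ∈ Finset.univ.filter (fun a : S => g a = c), x a * f a) ^ 2 := by
    intro x
    have h1 : star x ⬝ᵥ (L *ᵥ x)
        = ∑ a, ∑ b, (if g a = g b then (1:ℝ) else 0) * ((x a * f a) * (x b * f b)) := by
      simp only [dotProduct, Matrix.mulVec, Pi.star_apply, star_trivial]
      refine Finset.sum_congr rfl fun a _ => ?_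
      rw [Finset.mul_sum]
      refine Finset.sum_congr rfl fun b _ => ?_
      rw [hLf a b]
      by_cases h : g a = g b
      · simp only [h, if_pos]; ring
      · simp [h]
    rw [h1, aux_quad g (fun a => x a * f a)]
  -- positive semidefiniteness
  have hherm : L.IsHermitian := by
    ext a b
    rw [Matrix.conjTranspose_apply, hLf a b, hLf b a, star_trivial]
    by_cases h : g a = g b
    · rw [if_pos h, if_pos h.symm]; ring
    · rw [if_neg h, if_neg fun e => h e.symm]; ring
  have hpsd : L.PosSemidef := by
    refine Matrix.PosSemidef.of_dotProduct_mulVec_nonneg hherm fun x => ?_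
    rw [hquad x]
    exact Finset.sum_nonneg fun c _ => sq_nonneg _
  refine ⟨hpsd, ?_, ?_⟩
  -- eigenvector for the top eigenvalue
  · set x : S → ℝ := fun a => if g a = (0, 0) then f a else 0 with hx
    have hxe : L *ᵥ x = lam • x := by
      funext a
      show ∑ b, L a b * x b = (lam • x) a
      by_cases ha : g a = (0, 0)
      · have hterm : ∀ b : S, L a b * x b = (if g b = (0, 0) then f a * f b ^ 2 else 0) := by
          intro b
          rw [hLf a b]
          by_cases hb : g b = (0, 0)
          · have : g a = g b := by rw [ha, hb]
            rw [if_pos hb, if_pos this]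
            simp only [hx, if_pos hb]
            ring
          · rw [if_neg hb]
            simp only [hx, if_neg hb]
            ring
        rw [Finset.sum_congr rfl fun b _ => hterm b, ← Finset.sum_filter, ← Finset.mul_sum]
        simp only [Pi.smul_apply, smul_eq_mul, hx, if_pos ha]
        rw [hlamdef]
        ring
      · have hterm : ∀ b : S, L a b * x b = 0 := by
          intro b
          rw [hLf a b]
          by_cases hb : g b = (0, 0)
          · rw [if_neg fun e => ha (e.trans hb)]; ring
          · simp only [hx, if_neg hb]; ring
        rw [Finset.sum_congr rfl fun b _ => hterm b, Finset.sum_const_zero]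
        simp only [Pi.smul_apply, smul_eq_mul, hx, if_neg ha, mul_zero]
    have hga0 : g a0 = (0, 0) := by simp [hg, ha0, auxg]
    have hfa0 : f a0 ≠ 0 := by
      have h1 : (0:ℝ) < (2 * (auxt ((a0 : S) : ℕ × ℕ × ℕ) : ℝ) + 3) / 2 := by positivity
      simp only [hf, auxf]
      exact mul_ne_zero (pow_ne_zero _ (by norm_num)) (ne_of_gt (Real.sqrt_pos.mpr h1))
    have hx0 : x ≠ 0 := by
      intro h0
      have := congrFun h0 a0
      rw [hx] at this
      simp only [if_pos hga0, Pi.zero_apply] at this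
      exact hfa0 this
    rw [spectrum.mem_iff]
    intro hunit
    have hdet : (algebraMap ℝ (Matrix S S ℝ) ((((p - n) * (p + n + 4) : ℤ) : ℝ) / 2) - L).det
        = 0 := by
      rw [← Matrix.exists_mulVec_eq_zero_iff]
      refine ⟨x, hx0, ?_⟩
      rw [Matrix.sub_mulVec, Algebra.algebraMap_eq_smul_one, Matrix.smul_mulVec,
        Matrix.one_mulVec, hxe, hlam, sub_self]
    have := (Matrix.isUnit_iff_isUnit_det _).mp hunit
    rw [hdet] at this
    simp at this
  -- upper bound on the spectrum
  · intro μ hμ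
    rw [spectrum.mem_iff] at hμ
    have hdet : (algebraMap ℝ (Matrix S S ℝ) μ - L).det = 0 := by
      by_contra h
      exact hμ ((Matrix.isUnit_iff_isUnit_det _).mpr (isUnit_iff_ne_zero.mpr h))
    obtain ⟨v, hv0, hv⟩ := (Matrix.exists_mulVec_eq_zero_iff).mpr hdet
    have hLv : L *ᵥ v = μ • v := by
      rw [Matrix.sub_mulVec, Algebra.algebraMap_eq_smul_one, Matrix.smul_mulVec,
        Matrix.one_mulVec, sub_eq_zero] at hv
      exact hv.symm
    have hsum : μ * ∑ a, v a ^ 2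
        = ∑ c ∈ Finset.univ.image g,
            (∑ a ∈ Finset.univ.filter (fun a : S => g a = c), v a * f a) ^ 2 := by
      have h1 : star v ⬝ᵥ (L *ᵥ v) = μ * ∑ a, v a ^ 2 := by
        rw [hLv]
        simp only [dotProduct, Pi.star_apply, star_trivial, Pi.smul_apply, smul_eq_mul]
        rw [Finset.mul_sum]
        exact Finset.sum_congr rfl fun a _ => by ring
      rw [← h1, hquad v]
    have hle : ∑ c ∈ Finset.univ.image g,
        (∑ a ∈ Finset.univ.filter (fun a : S => g a = c), v a * f a) ^ 2
        ≤ lam * ∑ a, v a ^ 2 := by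
      calc ∑ c ∈ Finset.univ.image g,
          (∑ a ∈ Finset.univ.filter (fun a : S => g a = c), v a * f a) ^ 2
          ≤ ∑ c ∈ Finset.univ.image g,
              lam * ∑ a ∈ Finset.univ.filter (fun a : S => g a = c), v a ^ 2 := by
            refine Finset.sum_le_sum fun c _ => ?_
            calc (∑ a ∈ Finset.univ.filter (fun a : S => g a = c), v a * f a) ^ 2
                ≤ (∑ a ∈ Finset.univ.filter (fun a : S => g a = c), v a ^ 2) *
                  (∑ a ∈ Finset.univ.filter (fun a : S => g a = c), f a ^ 2) :=
                  Finset.sum_mul_sq_le_sq_mul_sq _ _ _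
              _ ≤ (∑ a ∈ Finset.univ.filter (fun a : S => g a = c), v a ^ 2) * lam :=
                  mul_le_mul_of_nonneg_left (hfib c)
                    (Finset.sum_nonneg fun i _ => sq_nonneg _)
              _ = lam * ∑ a ∈ Finset.univ.filter (fun a : S => g a = c), v a ^ 2 :=
                  mul_comm _ _
        _ = lam * ∑ a, v a ^ 2 := by
            rw [← Finset.mul_sum,
              Finset.sum_fiberwise_of_maps_to
                (fun a _ => Finset.mem_image_of_mem g (Finset.mem_univ a))]
    have hpos : 0 < ∑ a, v a ^ 2 := by
      obtain ⟨a, ha⟩ := Function.ne_iff.mp hv0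
      refine Finset.sum_pos' (fun i _ => sq_nonneg _) ⟨a, Finset.mem_univ a, ?_⟩
      have : v a ≠ 0 := ha
      positivity
    have hfinal : μ * ∑ a, v a ^ 2 ≤ lam * ∑ a, v a ^ 2 := hsum ▸ hle
    have := le_of_mul_le_mul_right hfinal hpos
    rwa [hlam] at this
end
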